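/- arXiv:2410.23969 — 3 statements merged into one kernel-verified Lean document; each statement's English description precedes it below -/
import Mathlib

section
/- Let p ∈ [1, ∞), let 1 ≤ k ≤ d, let ρ be a d×d density matrix with eigenvalues α₁ ≥ α₂ ≥ … ≥ α_d in non-increasing order, and let A ∈ ℂ^{d×d} be a positive semidefinite matrix of rank at most k. Then ‖ρ − A‖_p^p ≥ Σ_{i=k+1}^d α_i^p. -/
open Matrix
open scoped ComplexOrder

/-- The singular values of a complex square matrix `M`: the square roots of the
eigenvalues of `Mᴴ * M` (in the order provided by the spectral theorem). -/
noncomputable def singularValues {d : ℕ} (M : Matrix (Fin d) (Fin d) ℂ) : Fin d → ℝ :=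
  fun i => Real.sqrt ((Matrix.isHermitian_conjTranspose_mul_self M).eigenvalues i)

/-- The Schatten `p`-norm of a complex square matrix, `(∑ i, sᵢ(M)^p)^(1/p)`. -/
noncomputable def schattenNorm {d : ℕ} (p : ℝ) (M : Matrix (Fin d) (Fin d) ℂ) : ℝ :=
  (∑ i, singularValues M i ^ p) ^ (1 / p)

namespace RankApproxAux

open Polynomial

variable {d : ℕ}

theorem charpoly_conj' (U V M : Matrix (Fin d) (Fin d) ℂ) (hUV : U * V = 1) :
    (U * M * V).charpoly = M.charpoly := by
  have hUV' : U.map C * V.map C = 1 := by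
    rw [← Matrix.map_mul, hUV, Matrix.map_one _ (map_zero C) (map_one C)]
  have key : charmatrix (U * M * V) = U.map C * charmatrix M * V.map C := by
    rw [charmatrix, charmatrix]
    simp only [RingHom.mapMatrix_apply, Matrix.map_mul]
    rw [mul_sub, sub_mul]
    congr 1
    rw [mul_assoc, (Matrix.scalar_commute (X : ℂ[X]) (fun r => Commute.all _ r) (V.map C)).eq,
      ← mul_assoc, hUV', one_mul]
  rw [Matrix.charpoly, Matrix.charpoly, key, Matrix.det_mul, Matrix.det_mul]
  rw [mul_comm (det (U.map C)), mul_assoc, ← Matrix.det_mul, hUV', Matrix.det_one, mul_one]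

theorem charpoly_diag' (v : Fin d → ℂ) : (diagonal v).charpoly = ∏ i, (X - C (v i)) := by
  rw [Matrix.charpoly_of_upperTriangular _ (Matrix.blockTriangular_diagonal v)]
  simp

theorem roots_prod' (a : Fin d → ℂ) : (∏ i, (X - C (a i))).roots = Finset.univ.val.map a := by
  rw [Finset.prod, show (fun i => X - C (a i)) = ((fun z => X - C z) ∘ a) from rfl,
    ← Multiset.map_map]
  exact roots_multiset_prod_X_sub_C _

theorem spectral_charpoly {B : Matrix (Fin d) (Fin d) ℂ} (hB : B.IsHermitian) :
    B.charpoly = ∏ i, (X - C ((hB.eigenvalues i : ℝ) : ℂ)) := by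
  have hU := Matrix.mem_unitaryGroup_iff.mp (hB.eigenvectorUnitary).2
  calc B.charpoly
      = ((hB.eigenvectorUnitary : Matrix (Fin d) (Fin d) ℂ) *
          diagonal (RCLike.ofReal ∘ hB.eigenvalues) *
          star (hB.eigenvectorUnitary : Matrix (Fin d) (Fin d) ℂ)).charpoly := by
        rw [← Unitary.conjStarAlgAut_apply (S := ℂ), ← hB.spectral_theorem]
    _ = (diagonal (RCLike.ofReal ∘ hB.eigenvalues)).charpoly := charpoly_conj' _ _ _ hU
    _ = ∏ i, (X - C ((hB.eigenvalues i : ℝ) : ℂ)) := by rw [charpoly_diag']; rfl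

theorem conj_mul_conj (U sU D : Matrix (Fin d) (Fin d) ℂ) (h : sU * U = 1) :
    (U * D * sU) * (U * D * sU) = U * (D * D) * sU := by
  rw [mul_assoc (U * D), ← mul_assoc sU, ← mul_assoc sU, h, one_mul, ← mul_assoc, mul_assoc U D D]

theorem eig_sq_multiset {B : Matrix (Fin d) (Fin d) ℂ} (hB : B.IsHermitian) :
    Finset.univ.val.map (fun i => (Matrix.isHermitian_conjTranspose_mul_self B).eigenvalues i)
      = Finset.univ.val.map (fun i => hB.eigenvalues i ^ 2) := by
  have hU := Matrix.mem_unitaryGroup_iff.mp (hB.eigenvectorUnitary).2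
  have hU' := Matrix.mem_unitaryGroup_iff'.mp (hB.eigenvectorUnitary).2
  have h1 : Bᴴ * B = (hB.eigenvectorUnitary : Matrix (Fin d) (Fin d) ℂ) *
      diagonal (fun i => ((hB.eigenvalues i ^ 2 : ℝ) : ℂ)) *
      star (hB.eigenvectorUnitary : Matrix (Fin d) (Fin d) ℂ) := by
    conv_lhs => rw [hB.eq, hB.spectral_theorem, Unitary.conjStarAlgAut_apply]
    rw [conj_mul_conj _ _ _ hU', Matrix.diagonal_mul_diagonal]
    have : (fun i => (RCLike.ofReal ∘ hB.eigenvalues) i * (RCLike.ofReal ∘ hB.eigenvalues) i)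
        = fun i => ((hB.eigenvalues i ^ 2 : ℝ) : ℂ) := by
      funext i; simp [pow_two]
    rw [this]
  have h2 : (Bᴴ * B).charpoly = ∏ i,
      (X - C (((Matrix.isHermitian_conjTranspose_mul_self B).eigenvalues i : ℝ) : ℂ)) :=
    spectral_charpoly _
  have h3 : (Bᴴ * B).charpoly = ∏ i, (X - C ((hB.eigenvalues i ^ 2 : ℝ) : ℂ)) := by
    rw [h1, charpoly_conj' _ _ _ hU, charpoly_diag']
  have h5 := congrArg Polynomial.roots (h2.symm.trans h3)
  rw [roots_prod', roots_prod'] at h5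
  have h6 : Multiset.map (fun x : ℝ => (x : ℂ))
        (Finset.univ.val.map fun i => (Matrix.isHermitian_conjTranspose_mul_self B).eigenvalues i)
      = Multiset.map (fun x : ℝ => (x : ℂ))
        (Finset.univ.val.map fun i => hB.eigenvalues i ^ 2) := by
    rw [Multiset.map_map, Multiset.map_map]
    exact h5
  exact Multiset.map_injective Complex.ofReal_injective h6

theorem sv_pow_sum {B : Matrix (Fin d) (Fin d) ℂ} (hB : B.IsHermitian) (p : ℝ) :
    ∑ m, singularValues B m ^ p = ∑ m, |hB.eigenvalues m| ^ p := by
  have h := eig_sq_multiset hB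
  have h2 := congrArg (fun s : Multiset ℝ => (s.map (fun t => Real.sqrt t ^ p)).sum) h
  simp only [Multiset.map_map, Function.comp] at h2
  rw [show (fun m => singularValues B m ^ p)
      = fun m => Real.sqrt ((Matrix.isHermitian_conjTranspose_mul_self B).eigenvalues m) ^ p from rfl,
    Finset.sum_eq_multiset_sum, Finset.sum_eq_multiset_sum]
  rw [show (fun m => |hB.eigenvalues m| ^ p)
      = fun m => Real.sqrt (hB.eigenvalues m ^ 2) ^ p by
    funext m; rw [Real.sqrt_sq_eq_abs]]
  exact h2

/-- span of coordinate vectors indexed by `S` -/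
noncomputable def coordSpan (S : Finset (Fin d)) : Submodule ℂ (Fin d → ℂ) :=
  Submodule.span ℂ ((fun j => Pi.single j (1 : ℂ)) '' ↑S)

theorem coordSpan_support {S : Finset (Fin d)} {c : Fin d → ℂ} (hc : c ∈ coordSpan S)
    {m : Fin d} (hm : m ∉ S) : c m = 0 := by
  have hle : coordSpan S ≤ LinearMap.ker (LinearMap.proj (R := ℂ) (φ := fun _ : Fin d => ℂ) m) := by
    rw [coordSpan, Submodule.span_le]
    rintro x ⟨j, hj, rfl⟩
    have hjm : j ≠ m := fun h => hm (h ▸ hj)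
    simp only [SetLike.mem_coe, LinearMap.mem_ker, LinearMap.proj_apply]
    exact Pi.single_eq_of_ne (Ne.symm hjm) 1
  simpa using hle hc

theorem finrank_coordSpan (S : Finset (Fin d)) :
    Module.finrank ℂ (coordSpan S) = S.card := by
  classical
  have hinj : Function.Injective (fun j : Fin d => Pi.single j (1 : ℂ)) := by
    intro a b hab
    by_contra hne
    have h2 := congrFun hab a
    simp only [Pi.single_eq_same, Pi.single_eq_of_ne hne] at h2
    exact one_ne_zero h2
  have hli : LinearIndependent ℂ
      ((↑) : ((fun j : Fin d => Pi.single j (1 : ℂ)) '' ↑S) → (Fin d → ℂ)) := by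
    have h0 := (Pi.basisFun ℂ (Fin d)).linearIndependent
    have heq : (⇑(Pi.basisFun ℂ (Fin d)) ∘ (Subtype.val : (↑S : Set (Fin d)) → Fin d))
        = fun j : (↑S : Set (Fin d)) => (Pi.single (j : Fin d) (1 : ℂ) : Fin d → ℂ) := by
      funext j; simp
    have h1 : LinearIndependent ℂ
        (fun j : (↑S : Set (Fin d)) => (Pi.single (j : Fin d) (1 : ℂ) : Fin d → ℂ)) :=
      heq ▸ (h0.comp ((↑) : (↑S : Set (Fin d)) → Fin d) Subtype.val_injective)
    have h2 := h1.linearIndepOn_id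
    rwa [show Set.range (fun j : (↑S : Set (Fin d)) => (Pi.single (j : Fin d) (1 : ℂ) : Fin d → ℂ))
        = (fun j : Fin d => Pi.single j (1 : ℂ)) '' ↑S by
      rw [show (fun j : (↑S : Set (Fin d)) => (Pi.single (j : Fin d) (1 : ℂ) : Fin d → ℂ))
        = (fun j : Fin d => Pi.single j (1 : ℂ)) ∘ (Subtype.val : (↑S : Set (Fin d)) → Fin d)
        from rfl, Set.range_comp, Subtype.range_coe]] at h2
  rw [coordSpan, finrank_span_set_eq_card hli]
  rw [Set.toFinset_image]
  rw [Finset.card_image_of_injective _ hinj]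
  simp

/-- span of eigenvectors of a Hermitian matrix indexed by `S` -/
noncomputable def espan {B : Matrix (Fin d) (Fin d) ℂ} (hB : B.IsHermitian)
    (S : Finset (Fin d)) : Submodule ℂ (Fin d → ℂ) :=
  (coordSpan S).map (mulVecLin (hB.eigenvectorUnitary : Matrix (Fin d) (Fin d) ℂ))

theorem finrank_espan {B : Matrix (Fin d) (Fin d) ℂ} (hB : B.IsHermitian)
    (S : Finset (Fin d)) : Module.finrank ℂ (espan hB S) = S.card := by
  have hU := Matrix.mem_unitaryGroup_iff.mp (hB.eigenvectorUnitary).2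
  have hU' := Matrix.mem_unitaryGroup_iff'.mp (hB.eigenvectorUnitary).2
  set Um := (hB.eigenvectorUnitary : Matrix (Fin d) (Fin d) ℂ)
  have hinv : Invertible Um := ⟨star Um, hU', hU⟩
  have hmap : ((Um.toLinearEquiv' hinv : (Fin d → ℂ) ≃ₗ[ℂ] (Fin d → ℂ)) :
      (Fin d → ℂ) →ₗ[ℂ] (Fin d → ℂ)) = mulVecLin Um := by
    rw [show ((Um.toLinearEquiv' hinv : (Fin d → ℂ) ≃ₗ[ℂ] (Fin d → ℂ)) :
      (Fin d → ℂ) →ₗ[ℂ] (Fin d → ℂ)) = Matrix.toLin' Um from rfl, Matrix.toLin'_apply']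
  have he : espan hB S = (coordSpan S).map
      ((Um.toLinearEquiv' hinv : (Fin d → ℂ) ≃ₗ[ℂ] (Fin d → ℂ)) :
        (Fin d → ℂ) →ₗ[ℂ] (Fin d → ℂ)) := by rw [hmap]; rfl
  rw [he, LinearEquiv.finrank_map_eq, finrank_coordSpan]

theorem norm_re_eq (x : Fin d → ℂ) : (star x ⬝ᵥ x).re = ∑ m, Complex.normSq (x m) := by
  rw [dotProduct, Complex.re_sum]
  congr 1; funext m
  simp [Complex.star_def, Complex.mul_re, Complex.normSq_apply, mul_comm]

theorem norm_re_pos {x : Fin d → ℂ} (hx : x ≠ 0) : 0 < (star x ⬝ᵥ x).re := by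
  rw [norm_re_eq]
  obtain ⟨i, hi⟩ : ∃ i, x i ≠ 0 := by
    by_contra h
    push_neg at h
    exact hx (funext h)
  exact Finset.sum_pos' (fun m _ => Complex.normSq_nonneg _)
    ⟨i, Finset.mem_univ i, Complex.normSq_pos.mpr hi⟩

theorem quad_re_eq {B : Matrix (Fin d) (Fin d) ℂ} (hB : B.IsHermitian) (c : Fin d → ℂ) :
    (star ((hB.eigenvectorUnitary : Matrix (Fin d) (Fin d) ℂ) *ᵥ c) ⬝ᵥ
        (B *ᵥ ((hB.eigenvectorUnitary : Matrix (Fin d) (Fin d) ℂ) *ᵥ c))).re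
      = ∑ m, hB.eigenvalues m * Complex.normSq (c m) := by
  have hU' := Matrix.mem_unitaryGroup_iff'.mp (hB.eigenvectorUnitary).2
  set Um := (hB.eigenvectorUnitary : Matrix (Fin d) (Fin d) ℂ) with hUm
  have h1 : B *ᵥ (Um *ᵥ c) = Um *ᵥ (diagonal (RCLike.ofReal ∘ hB.eigenvalues) *ᵥ c) := by
    rw [mulVec_mulVec, mulVec_mulVec]
    conv_lhs => rw [hB.spectral_theorem, Unitary.conjStarAlgAut_apply]
    rw [mul_assoc, hU', mul_one]
  rw [h1, star_mulVec, dotProduct_mulVec, vecMul_vecMul,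
    show Umᴴ = star Um from rfl, hU', vecMul_one]
  rw [dotProduct, Complex.re_sum]
  congr 1; funext m
  rw [mulVec_diagonal]
  simp [Complex.star_def, Complex.mul_re, Complex.mul_im, Complex.normSq_apply]
  ring

theorem starnorm_eq {B : Matrix (Fin d) (Fin d) ℂ} (hB : B.IsHermitian) (c : Fin d → ℂ) :
    (star ((hB.eigenvectorUnitary : Matrix (Fin d) (Fin d) ℂ) *ᵥ c) ⬝ᵥ
        ((hB.eigenvectorUnitary : Matrix (Fin d) (Fin d) ℂ) *ᵥ c)).re
      = ∑ m, Complex.normSq (c m) := by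
  have hU' := Matrix.mem_unitaryGroup_iff'.mp (hB.eigenvectorUnitary).2
  set Um := (hB.eigenvectorUnitary : Matrix (Fin d) (Fin d) ℂ) with hUm
  rw [star_mulVec, dotProduct_mulVec, vecMul_vecMul,
    show Umᴴ = star Um from rfl, hU', vecMul_one, norm_re_eq]

theorem quad_le {B : Matrix (Fin d) (Fin d) ℂ} (hB : B.IsHermitian) (S : Finset (Fin d))
    (t : ℝ) (ht : ∀ m ∈ S, hB.eigenvalues m ≤ t) {x : Fin d → ℂ} (hx : x ∈ espan hB S) :
    (star x ⬝ᵥ (B *ᵥ x)).re ≤ t * (star x ⬝ᵥ x).re := by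
  obtain ⟨c, hcS, rfl⟩ := Submodule.mem_map.mp hx
  rw [Matrix.mulVecLin_apply, quad_re_eq hB c, starnorm_eq hB c, Finset.mul_sum]
  apply Finset.sum_le_sum
  intro m _
  by_cases hm : m ∈ S
  · exact mul_le_mul_of_nonneg_right (ht m hm) (Complex.normSq_nonneg _)
  · rw [coordSpan_support hcS hm]
    simp

theorem quad_ge {B : Matrix (Fin d) (Fin d) ℂ} (hB : B.IsHermitian) (S : Finset (Fin d))
    (t : ℝ) (ht : ∀ m ∈ S, t ≤ hB.eigenvalues m) {x : Fin d → ℂ} (hx : x ∈ espan hB S) :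
    t * (star x ⬝ᵥ x).re ≤ (star x ⬝ᵥ (B *ᵥ x)).re := by
  obtain ⟨c, hcS, rfl⟩ := Submodule.mem_map.mp hx
  rw [Matrix.mulVecLin_apply, quad_re_eq hB c, starnorm_eq hB c, Finset.mul_sum]
  apply Finset.sum_le_sum
  intro m _
  by_cases hm : m ∈ S
  · exact mul_le_mul_of_nonneg_right (ht m hm) (Complex.normSq_nonneg _)
  · rw [coordSpan_support hcS hm]
    simp

end RankApproxAux

open RankApproxAux

/-- If `ρ` is a `d × d` density matrix with eigenvalues `α₀ ≥ α₁ ≥ … ≥ α_{d-1}` and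
`A` is positive semidefinite of rank at most `k`, then
`‖ρ - A‖_p^p ≥ ∑_{i ≥ k} αᵢ^p` (i.e. the sum of the `p`-th powers of
the `d - k` smallest eigenvalues). -/
theorem rank_k_psd_approximation_lower_bound (d k : ℕ) (hk1 : 1 ≤ k) (hkd : k ≤ d)
    (p : ℝ) (hp : 1 ≤ p)
    (ρ : Matrix (Fin d) (Fin d) ℂ) (hρ : ρ.PosSemidef) (hρtr : ρ.trace = 1)
    (α : Fin d → ℝ) (hα : Antitone α)
    (hαeig : ∃ σ : Equiv.Perm (Fin d), α = hρ.1.eigenvalues ∘ σ)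
    (A : Matrix (Fin d) (Fin d) ℂ) (hA : A.PosSemidef) (hArank : A.rank ≤ k) :
    ∑ i ∈ Finset.univ.filter (fun i : Fin d => k ≤ (i : ℕ)), α i ^ p
      ≤ schattenNorm p (ρ - A) ^ p := by
  classical
  obtain ⟨σ, hσ⟩ := hαeig
  set B := ρ - A with hBdef
  have hB : B.IsHermitian := hρ.1.sub hA.1
  have hp0 : (0 : ℝ) ≤ p := le_trans zero_le_one hp
  have hpne : p ≠ 0 := by linarith
  have hαnn : ∀ i, 0 ≤ α i := fun i => by
    rw [hσ]; exact hρ.eigenvalues_nonneg (σ i)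
  -- sorting permutation for the eigenvalues of B
  set τ : Equiv.Perm (Fin d) := Tuple.sort (fun l => -hB.eigenvalues l) with hτ
  have hβanti : Antitone (fun l => hB.eigenvalues (τ l)) := by
    have hm := Tuple.monotone_sort (fun l => -hB.eigenvalues l)
    intro a b hab
    have h := hm hab
    simp only [Function.comp_apply] at h
    linarith
  -- key eigenvalue inequality
  have key : ∀ i : Fin d, k ≤ (i : ℕ) →
      α i ≤ hB.eigenvalues (τ ⟨(i : ℕ) - k, lt_of_le_of_lt (Nat.sub_le _ _) i.isLt⟩) := by
    intro i hi
    set j : Fin d := ⟨(i : ℕ) - k, lt_of_le_of_lt (Nat.sub_le _ _) i.isLt⟩ with hjdef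
    set V₁ := espan hρ.1 ((Finset.Iic i).image σ) with hV₁
    set V₂ := LinearMap.ker (mulVecLin A) with hV₂
    set V₃ := espan hB ((Finset.Ici j).image τ) with hV₃
    have hd1 : Module.finrank ℂ V₁ = (i : ℕ) + 1 := by
      rw [hV₁, finrank_espan, Finset.card_image_of_injective _ σ.injective, Fin.card_Iic]
    have hd3 : Module.finrank ℂ V₃ = d - (j : ℕ) := by
      rw [hV₃, finrank_espan, Finset.card_image_of_injective _ τ.injective, Fin.card_Ici]
    have hdpi : Module.finrank ℂ (Fin d → ℂ) = d := by simp
    have hd2 : A.rank + Module.finrank ℂ V₂ = d := by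
      have h := LinearMap.finrank_range_add_finrank_ker (mulVecLin A)
      rw [hdpi] at h
      exact h
    have hinf : ∀ P Q : Submodule ℂ (Fin d → ℂ),
        Module.finrank ℂ ↥P + Module.finrank ℂ ↥Q ≤ d + Module.finrank ℂ ↥(P ⊓ Q) := by
      intro P Q
      have h1 := Submodule.finrank_sup_add_finrank_inf_eq P Q
      have h2 : Module.finrank ℂ ↥(P ⊔ Q) ≤ d := by
        have h3 := Submodule.finrank_le (P ⊔ Q)
        rwa [hdpi] at h3
      omega
    have hjval : (j : ℕ) = (i : ℕ) - k := rfl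
    have hpos : 0 < Module.finrank ℂ ↥(V₁ ⊓ (V₂ ⊓ V₃)) := by
      have h1 := hinf V₁ (V₂ ⊓ V₃)
      have h2 := hinf V₂ V₃
      have hilt := i.isLt
      omega
    have hnebot : V₁ ⊓ (V₂ ⊓ V₃) ≠ ⊥ := by
      intro h
      rw [h, finrank_bot] at hpos
      exact absurd hpos (lt_irrefl 0)
    obtain ⟨x, hxmem, hx0⟩ := (Submodule.ne_bot_iff (V₁ ⊓ (V₂ ⊓ V₃))).mp hnebot
    obtain ⟨hx1, hx2', hx3⟩ : x ∈ V₁ ∧ x ∈ V₂ ∧ x ∈ V₃ := by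
      have h1 := (Submodule.mem_inf.mp hxmem)
      exact ⟨h1.1, (Submodule.mem_inf.mp h1.2).1, (Submodule.mem_inf.mp h1.2).2⟩
    have hx2 : A *ᵥ x = 0 := by
      have h := LinearMap.mem_ker.mp hx2'
      rwa [Matrix.mulVecLin_apply] at h
    have hlow : α i * (star x ⬝ᵥ x).re ≤ (star x ⬝ᵥ (ρ *ᵥ x)).re := by
      apply quad_ge hρ.1 _ _ _ hx1
      intro m hm
      obtain ⟨l, hl, rfl⟩ := Finset.mem_image.mp hm
      have heq : hρ.1.eigenvalues (σ l) = α l := by rw [hσ]; rfl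
      rw [heq]
      exact hα (Finset.mem_Iic.mp hl)
    have hup : (star x ⬝ᵥ (B *ᵥ x)).re ≤ hB.eigenvalues (τ j) * (star x ⬝ᵥ x).re := by
      apply quad_le hB _ _ _ hx3
      intro m hm
      obtain ⟨l, hl, rfl⟩ := Finset.mem_image.mp hm
      exact hβanti (Finset.mem_Ici.mp hl)
    have hBx : (star x ⬝ᵥ (B *ᵥ x)) = star x ⬝ᵥ (ρ *ᵥ x) := by
      rw [hBdef, Matrix.sub_mulVec, dotProduct_sub, hx2, dotProduct_zero, sub_zero]
    have hchain : α i * (star x ⬝ᵥ x).re ≤ hB.eigenvalues (τ j) * (star x ⬝ᵥ x).re := by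
      calc α i * (star x ⬝ᵥ x).re ≤ (star x ⬝ᵥ (ρ *ᵥ x)).re := hlow
        _ = (star x ⬝ᵥ (B *ᵥ x)).re := by rw [hBx]
        _ ≤ hB.eigenvalues (τ j) * (star x ⬝ᵥ x).re := hup
    exact le_of_mul_le_mul_right hchain (norm_re_pos hx0)
  -- assemble
  have hnn : (0 : ℝ) ≤ ∑ m, singularValues B m ^ p :=
    Finset.sum_nonneg fun m _ => Real.rpow_nonneg (Real.sqrt_nonneg _) _
  have hsch : schattenNorm p B ^ p = ∑ m, singularValues B m ^ p := by
    rw [schattenNorm, ← Real.rpow_mul hnn, one_div, inv_mul_cancel₀ hpne, Real.rpow_one]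
  set emb : Fin d → Fin d :=
    fun i => τ ⟨(i : ℕ) - k, lt_of_le_of_lt (Nat.sub_le _ _) i.isLt⟩ with hemb
  have hembinj : ∀ i ∈ Finset.univ.filter (fun i : Fin d => k ≤ (i : ℕ)),
      ∀ i' ∈ Finset.univ.filter (fun i : Fin d => k ≤ (i : ℕ)), emb i = emb i' → i = i' := by
    intro i hi i' hi' h
    have hik := (Finset.mem_filter.mp hi).2
    have hik' := (Finset.mem_filter.mp hi').2
    have h2 := τ.injective h
    have h3 : (i : ℕ) - k = (i' : ℕ) - k := congrArg Fin.val h2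
    have : (i : ℕ) = (i' : ℕ) := by omega
    exact Fin.ext this
  calc ∑ i ∈ Finset.univ.filter (fun i : Fin d => k ≤ (i : ℕ)), α i ^ p
      ≤ ∑ i ∈ Finset.univ.filter (fun i : Fin d => k ≤ (i : ℕ)),
          |hB.eigenvalues (emb i)| ^ p := by
        apply Finset.sum_le_sum
        intro i hi
        have hik := (Finset.mem_filter.mp hi).2
        exact Real.rpow_le_rpow (hαnn i) ((key i hik).trans (le_abs_self _)) hp0
    _ = ∑ m ∈ (Finset.univ.filter (fun i : Fin d => k ≤ (i : ℕ))).image emb,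
          |hB.eigenvalues m| ^ p := (Finset.sum_image (f := fun m => |hB.eigenvalues m| ^ p) hembinj).symm
    _ ≤ ∑ m, |hB.eigenvalues m| ^ p := by
        apply Finset.sum_le_sum_of_subset_of_nonneg (Finset.subset_univ _)
        intro m _ _
        exact Real.rpow_nonneg (abs_nonneg _) _
    _ = ∑ m, singularValues B m ^ p := (sv_pow_sum hB p).symm
    _ = schattenNorm p B ^ p := hsch.symm
end

section
/- Let p ∈ [1, ∞), 1 ≤ k ≤ d, and let ρ = U diag(α) Uᴴ be a d×d density matrix with eigenvalues α₁ ≥ … ≥ α_d in non-increasing order. Then its rank-k truncation ρ_{1:k} = U diag(α₁,…,α_k,0,…,0) Uᴴ satisfies ‖ρ − ρ_{1:k}‖_p = (Σ_{i=k+1}^d α_i^p)^{1/p}, and ρ_{1:k} is an optimal rank-k positive semidefinite approximation of ρ in Schatten p-norm: for every positive semidefinite A of rank at most k, ‖ρ − A‖_p ≥ ‖ρ − ρ_{1:k}‖_p. -/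
set_option maxHeartbeats 1000000

open Polynomial Finset


open Matrix
open scoped ComplexOrder

section Aux

variable {d : ℕ}

local notation "E𝕜" => EuclideanSpace ℂ (Fin d)

lemma mycharpoly_conj (V D : Matrix (Fin d) (Fin d) ℂ)
    (hV : V ∈ Matrix.unitaryGroup (Fin d) ℂ) :
    (V * D * Vᴴ).charpoly = D.charpoly := by
  have h1 : V * Vᴴ = 1 := Matrix.mem_unitaryGroup_iff.mp hV
  have hmap : ∀ A B : Matrix (Fin d) (Fin d) ℂ,
      (A * B).map (C : ℂ → ℂ[X]) = A.map C * B.map C := fun A B =>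
    Matrix.map_mul (f := (C : ℂ →+* ℂ[X]))
  have hone : (1 : Matrix (Fin d) (Fin d) ℂ).map (C : ℂ → ℂ[X]) = 1 :=
    Matrix.map_one _ (map_zero C) (map_one C)
  have hVV : V.map (C : ℂ → ℂ[X]) * Vᴴ.map C = 1 := by
    rw [← hmap, h1, hone]
  have hcm : charmatrix (V * D * Vᴴ)
      = V.map (C : ℂ → ℂ[X]) * charmatrix D * Vᴴ.map C := by
    unfold charmatrix
    rw [mul_sub, sub_mul]
    congr 1
    · rw [mul_assoc]
      rw [(Matrix.scalar_commute (X : ℂ[X]) (fun r => Commute.all _ _) _).eq, ← mul_assoc, hVV,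
        one_mul]
    · simp only [RingHom.mapMatrix_apply]
      rw [hmap, hmap]
  rw [Matrix.charpoly, Matrix.charpoly, hcm, det_mul, det_mul, mul_comm, ← mul_assoc, ← det_mul,
    det_mul, mul_comm (Vᴴ.map (C : ℂ → ℂ[X])).det, ← det_mul, hVV, det_one, one_mul]

lemma mycharpoly_diag (c : Fin d → ℂ) :
    (Matrix.diagonal c).charpoly = ∏ i, (X - C (c i)) := by
  have : charmatrix (Matrix.diagonal c) = Matrix.diagonal (fun i => X - C (c i)) := by
    ext i j
    by_cases h : i = j
    · subst h; simp [charmatrix_apply_eq]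
    · simp [charmatrix_apply_ne _ _ _ h, Matrix.diagonal_apply_ne _ h]
  rw [Matrix.charpoly, this, det_diagonal]

lemma prod_roots (c : Fin d → ℂ) :
    (∏ i, (X - C (c i))).roots = Finset.univ.val.map c := by
  rw [show (∏ i, (X - C (c i))) = ((Finset.univ.val.map c).map (fun a => X - C a)).prod by
    rw [Multiset.map_map]; rfl]
  exact roots_multiset_prod_X_sub_C _

lemma eig_multiset (V : Matrix (Fin d) (Fin d) ℂ)
    (hV : V ∈ Matrix.unitaryGroup (Fin d) ℂ) (f : Fin d → ℝ)
    {H : Matrix (Fin d) (Fin d) ℂ}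
    (hHdef : H = V * Matrix.diagonal (fun i => (f i : ℂ)) * Vᴴ)
    (hH : H.IsHermitian) :
    Finset.univ.val.map (fun i => ((hH.eigenvalues i : ℝ) : ℂ))
      = Finset.univ.val.map (fun i => ((f i : ℝ) : ℂ)) := by
  have h1 : H.charpoly = ∏ i, (X - C ((f i : ℂ))) := by
    rw [hHdef, mycharpoly_conj _ _ hV, mycharpoly_diag]
  have h2 : H.charpoly = ∏ i, (X - C ((hH.eigenvalues i : ℂ))) := by
    conv_lhs => rw [hH.spectral_theorem]
    rw [Unitary.conjStarAlgAut_apply]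
    rw [show (star (hH.eigenvectorUnitary : Matrix (Fin d) (Fin d) ℂ))
        = (hH.eigenvectorUnitary : Matrix (Fin d) (Fin d) ℂ)ᴴ from rfl]
    rw [mycharpoly_conj _ _ hH.eigenvectorUnitary.2, show
      Matrix.diagonal (RCLike.ofReal ∘ hH.eigenvalues)
        = Matrix.diagonal (fun i => ((hH.eigenvalues i : ℝ) : ℂ)) from rfl, mycharpoly_diag]
  have := congrArg Polynomial.roots (h2.symm.trans h1)
  rwa [prod_roots, prod_roots] at this

lemma eig_sum_g (V : Matrix (Fin d) (Fin d) ℂ)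
    (hV : V ∈ Matrix.unitaryGroup (Fin d) ℂ) (f : Fin d → ℝ)
    {H : Matrix (Fin d) (Fin d) ℂ}
    (hHdef : H = V * Matrix.diagonal (fun i => (f i : ℂ)) * Vᴴ)
    (hH : H.IsHermitian) (g : ℝ → ℝ) :
    ∑ i, g (hH.eigenvalues i) = ∑ i, g (f i) := by
  have hms := eig_multiset V hV f hHdef hH
  have key : ∀ h : Fin d → ℝ,
      ∑ i, g (h i) = ((Finset.univ.val.map (fun i => ((h i : ℝ) : ℂ))).map
        (fun z => g z.re)).sum := by
    intro h
    rw [Multiset.map_map]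
    simp [Finset.sum, Function.comp]
  rw [key, key, hms]

lemma conjdiag_conjTranspose (V : Matrix (Fin d) (Fin d) ℂ) (f : Fin d → ℝ) :
    (V * Matrix.diagonal (fun i => (f i : ℂ)) * Vᴴ)ᴴ
      = V * Matrix.diagonal (fun i => (f i : ℂ)) * Vᴴ := by
  simp only [conjTranspose_mul, conjTranspose_conjTranspose, diagonal_conjTranspose]
  rw [mul_assoc]
  congr 2
  ext i j
  simp [Matrix.diagonal_apply]

lemma conjdiag_mul (V : Matrix (Fin d) (Fin d) ℂ)
    (hV : V ∈ Matrix.unitaryGroup (Fin d) ℂ) (c c' : Fin d → ℂ) :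
    (V * Matrix.diagonal c * Vᴴ) * (V * Matrix.diagonal c' * Vᴴ)
      = V * Matrix.diagonal (fun i => c i * c' i) * Vᴴ := by
  have h1 : Vᴴ * V = 1 := Matrix.mem_unitaryGroup_iff'.mp hV
  calc (V * Matrix.diagonal c * Vᴴ) * (V * Matrix.diagonal c' * Vᴴ)
      = V * (Matrix.diagonal c * ((Vᴴ * V) * (Matrix.diagonal c' * Vᴴ))) := by
        simp only [mul_assoc]
    _ = V * Matrix.diagonal (fun i => c i * c' i) * Vᴴ := by
        rw [h1, one_mul, ← mul_assoc (Matrix.diagonal c), Matrix.diagonal_mul_diagonal, mul_assoc]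

lemma sum_singular_pow_conj_diag (V : Matrix (Fin d) (Fin d) ℂ)
    (hV : V ∈ Matrix.unitaryGroup (Fin d) ℂ) (f : Fin d → ℝ)
    {M : Matrix (Fin d) (Fin d) ℂ}
    (hM : M = V * Matrix.diagonal (fun i => (f i : ℂ)) * Vᴴ) (p : ℝ) :
    ∑ i, singularValues M i ^ p = ∑ i, |f i| ^ p := by
  have hMHM : Mᴴ * M = V * Matrix.diagonal (fun i => ((f i ^ 2 : ℝ) : ℂ)) * Vᴴ := by
    rw [hM, conjdiag_conjTranspose, conjdiag_mul V hV]
    congr 1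
    · congr 1
      ext i
      push_cast
      ring
  have := eig_sum_g V hV (fun i => f i ^ 2) hMHM
    (Matrix.isHermitian_conjTranspose_mul_self M) (fun t => Real.sqrt t ^ p)
  unfold singularValues
  rw [this]
  congr 1
  ext i
  rw [Real.sqrt_sq_eq_abs]

lemma alpha_nonneg (U : Matrix (Fin d) (Fin d) ℂ) (hU : U ∈ Matrix.unitaryGroup (Fin d) ℂ)
    (α : Fin d → ℝ) (ρ : Matrix (Fin d) (Fin d) ℂ)
    (hρdef : ρ = U * Matrix.diagonal (fun i => (α i : ℂ)) * Uᴴ)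
    (hρ : ρ.PosSemidef) : ∀ i, 0 ≤ α i := by
  have h1 : Uᴴ * U = 1 := Matrix.mem_unitaryGroup_iff'.mp hU
  have h2 : Uᴴ * ρ * U = Matrix.diagonal (fun i => (α i : ℂ)) := by
    rw [hρdef]
    calc Uᴴ * (U * Matrix.diagonal (fun i => (α i : ℂ)) * Uᴴ) * U
        = (Uᴴ * U) * Matrix.diagonal (fun i => (α i : ℂ)) * (Uᴴ * U) := by
          simp only [mul_assoc]
      _ = Matrix.diagonal (fun i => (α i : ℂ)) := by rw [h1, one_mul, mul_one]
  have h3 : (Matrix.diagonal (fun i => (α i : ℂ))).PosSemidef := by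
    rw [← h2]
    exact hρ.conjTranspose_mul_mul_same U
  intro i
  have := Matrix.posSemidef_diagonal_iff.mp h3 i
  exact_mod_cast this

lemma quad_bound (b : OrthonormalBasis (Fin d) ℂ E𝕜)
    (T : E𝕜 →ₗ[ℂ] E𝕜) (lam : Fin d → ℝ)
    (hTb : ∀ i, T (b i) = (lam i : ℂ) • b i)
    (s : Finset (Fin d)) (c : ℝ) (hc : ∀ i ∈ s, lam i ≤ c)
    (x : E𝕜) (hx : x ∈ Submodule.span ℂ (b '' s)) :
    (inner ℂ x (T x) : ℂ).re ≤ c * ‖x‖ ^ 2 := by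
  classical
  set r : Fin d → ℂ := fun i => b.repr x i with hr
  have hr0 : ∀ i ∉ s, r i = 0 := by
    intro i hi
    have : ∀ y ∈ Submodule.span ℂ (b '' (s : Set (Fin d))), b.repr y i = 0 := by
      intro y hy
      induction hy using Submodule.span_induction with
      | mem v hv =>
        obtain ⟨j, hj, rfl⟩ := hv
        have : b.repr (b j) = EuclideanSpace.single j (1 : ℂ) := b.repr_self j
        rw [this]
        simp only [EuclideanSpace.single_apply]
        exact if_neg (by rintro rfl; exact hi hj)
      | zero => simp
      | add u v _ _ hu hv => rw [map_add]; simp [PiLp.add_apply, hu, hv]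
      | smul a u _ hu => rw [_root_.map_smul]; simp [PiLp.smul_apply, hu]
    exact this x hx
  have hxsum : x = ∑ i ∈ s, r i • b i :=
    ((Finset.sum_subset (Finset.subset_univ s) fun i _ hi => by
      show r i • b i = 0
      rw [hr0 i hi, zero_smul]).trans (b.sum_repr x)).symm
  have hTx : T x = ∑ i ∈ s, (r i * lam i) • b i := by
    conv_lhs => rw [hxsum]
    rw [map_sum]
    refine Finset.sum_congr rfl fun i _ => ?_
    rw [LinearMap.map_smul, hTb i, smul_smul, mul_comm]
  have hinner : (inner ℂ x (T x) : ℂ) = ∑ i ∈ s, (lam i : ℂ) * Complex.normSq (r i) := by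
    rw [hTx, inner_sum]
    refine Finset.sum_congr rfl fun i _ => ?_
    rw [inner_smul_right]
    have : (inner ℂ x (b i) : ℂ) = starRingEnd ℂ (r i) := by
      rw [← inner_conj_symm, ← b.repr_apply_apply]
    rw [this, ← Complex.mul_conj]
    ring
  have hnorm : ‖x‖ ^ 2 = ∑ i ∈ s, Complex.normSq (r i) := by
    have h1 : ‖x‖ ^ 2 = ∑ i, Complex.normSq (r i) := by
      have := b.repr.norm_map x
      rw [← this, EuclideanSpace.norm_eq, Real.sq_sqrt (by positivity)]
      refine Finset.sum_congr rfl fun i _ => ?_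
      rw [Complex.sq_norm]
    rw [h1, ← Finset.sum_subset (Finset.subset_univ s)]
    intro i _ hi
    rw [hr0 i hi, map_zero]
  have : (inner ℂ x (T x) : ℂ).re = ∑ i ∈ s, lam i * Complex.normSq (r i) := by
    rw [hinner]
    push_cast
    rw [Complex.re_sum]
    refine Finset.sum_congr rfl fun i _ => ?_
    norm_cast
  rw [this, hnorm, Finset.mul_sum]
  refine Finset.sum_le_sum fun i hi => ?_
  exact mul_le_mul_of_nonneg_right (hc i hi) (Complex.normSq_nonneg _)

lemma card_filter_lt (m : ℕ) (h : m ≤ d) :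
    (univ.filter (fun i : Fin d => (i : ℕ) < m)).card = m := by
  have : univ.filter (fun i : Fin d => (i : ℕ) < m) = univ.map (Fin.castLEEmb h) := by
    ext a
    simp only [mem_filter, mem_univ, true_and, mem_map, Fin.coe_castLEEmb]
    constructor
    · intro ha
      exact ⟨⟨(a : ℕ), ha⟩, by ext; simp⟩
    · rintro ⟨b, rfl⟩
      simpa using b.isLt
  rw [this, Finset.card_map, Finset.card_univ, Fintype.card_fin]

lemma finrank_span_ob (b : OrthonormalBasis (Fin d) ℂ E𝕜) (s : Finset (Fin d)) :
    Module.finrank ℂ (Submodule.span ℂ (b '' s)) = s.card := by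
  have li : LinearIndependent ℂ (fun i : {x // x ∈ s} => b (i : Fin d)) :=
    b.orthonormal.linearIndependent.comp _ Subtype.val_injective
  have hrange : Set.range (fun i : {x // x ∈ s} => b (i : Fin d)) = b '' (s : Set (Fin d)) := by
    ext v; simp
  rw [← hrange, finrank_span_eq_card li, Fintype.card_coe]

lemma toEuclideanLin_eigen {M : Matrix (Fin d) (Fin d) ℂ} (hM : M.IsHermitian) (i : Fin d) :
    Matrix.toEuclideanLin M (hM.eigenvectorBasis i)
      = ((hM.eigenvalues i : ℝ) : ℂ) • hM.eigenvectorBasis i := by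
  have h1 : Matrix.toEuclideanLin M (hM.eigenvectorBasis i)
      = (WithLp.equiv 2 (Fin d → ℂ)).symm (M *ᵥ ⇑(hM.eigenvectorBasis i)) := rfl
  rw [h1, hM.mulVec_eigenvectorBasis, RCLike.real_smul_eq_coe_smul (K := ℂ)]
  rfl

lemma mu_ge_alpha (k : ℕ) (hkd : k ≤ d) (α : Fin d → ℝ) (hα : Antitone α)
    (A' : Matrix (Fin d) (Fin d) ℂ) (hrank : A'.rank ≤ k)
    {E' : Matrix (Fin d) (Fin d) ℂ}
    (hE'def : E' = Matrix.diagonal (fun i => (α i : ℂ)) - A')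
    (hE' : E'.IsHermitian)
    (j : ℕ) (hj : j < d - k) :
    α ⟨k + j, by omega⟩
      ≤ hE'.eigenvalues (Tuple.sort hE'.eigenvalues (Fin.rev ⟨j, by omega⟩)) := by
  classical
  set lam := hE'.eigenvalues with hlam
  set τ := Tuple.sort lam with hτ
  set jf : Fin d := ⟨j, by omega⟩ with hjf
  set μ : ℝ := lam (τ (Fin.rev jf)) with hμ
  -- the three subspaces
  set bF : OrthonormalBasis (Fin d) ℂ E𝕜 := EuclideanSpace.basisFun (Fin d) ℂ with hbF
  set bE : OrthonormalBasis (Fin d) ℂ E𝕜 := hE'.eigenvectorBasis with hbE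
  set sW : Finset (Fin d) := univ.filter (fun i => (i : ℕ) < k + j + 1) with hsW
  set sT : Finset (Fin d) :=
    (univ.filter (fun i : Fin d => (i : ℕ) < d - j)).image τ with hsT
  set W : Submodule ℂ E𝕜 := Submodule.span ℂ (bF '' sW) with hW
  set N : Submodule ℂ E𝕜 := LinearMap.ker (Matrix.toEuclideanLin A') with hN
  set T' : Submodule ℂ E𝕜 := Submodule.span ℂ (bE '' sT) with hT'
  have hfinW : Module.finrank ℂ W = k + j + 1 := by
    rw [hW, finrank_span_ob, hsW, card_filter_lt _ (by omega)]
  have hfinT : Module.finrank ℂ T' = d - j := by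
    rw [hT', finrank_span_ob, hsT, Finset.card_image_of_injective _ τ.injective,
      card_filter_lt _ (by omega)]
  have hfinN : d - k ≤ Module.finrank ℂ N := by
    have h1 : A'.rank = Module.finrank ℂ (LinearMap.range (Matrix.toEuclideanLin A')) := by
      rw [Matrix.toEuclideanLin_eq_toLin_orthonormal]
      exact A'.rank_eq_finrank_range_toLin _ _
    have h2 := LinearMap.finrank_range_add_finrank_ker (Matrix.toEuclideanLin A')
    rw [finrank_euclideanSpace_fin] at h2
    rw [hN]
    omega
  have hdim : Module.finrank ℂ E𝕜 = d := finrank_euclideanSpace_fin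
  -- intersection is nontrivial
  have hWN : j + 1 ≤ Module.finrank ℂ (W ⊓ N : Submodule ℂ E𝕜) := by
    have h1 := Submodule.finrank_sup_add_finrank_inf_eq W N
    have hle := Submodule.finrank_le (W ⊔ N)
    rw [hdim] at hle
    omega
  have hWNT : 1 ≤ Module.finrank ℂ ((W ⊓ N) ⊓ T' : Submodule ℂ E𝕜) := by
    have h1 := Submodule.finrank_sup_add_finrank_inf_eq (W ⊓ N) T'
    have hle := Submodule.finrank_le ((W ⊓ N) ⊔ T')
    rw [hdim] at hle
    omega
  obtain ⟨x, hxmem, hxne⟩ :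
      ∃ x ∈ ((W ⊓ N) ⊓ T' : Submodule ℂ E𝕜), x ≠ 0 := by
    apply Submodule.exists_mem_ne_zero_of_ne_bot
    intro hbot
    rw [hbot] at hWNT
    simp at hWNT
  obtain ⟨⟨hxW, hxN⟩, hxT⟩ := hxmem
  -- upper bound from T'
  have hub : (inner ℂ x (Matrix.toEuclideanLin E' x) : ℂ).re ≤ μ * ‖x‖ ^ 2 := by
    refine quad_bound bE (Matrix.toEuclideanLin E') lam (fun i => toEuclideanLin_eigen hE' i)
      sT μ ?_ x hxT
    intro i hi
    rw [hsT] at hi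
    obtain ⟨i', hi', rfl⟩ := Finset.mem_image.mp hi
    have hi'lt : (i' : ℕ) < d - j := (Finset.mem_filter.mp hi').2
    have : i' ≤ Fin.rev jf := by
      rw [Fin.le_def, Fin.val_rev]
      simp only [hjf]
      omega
    exact Tuple.monotone_sort lam this
  -- lower bound from W and N
  have hAx : Matrix.toEuclideanLin A' x = 0 := LinearMap.mem_ker.mp hxN
  have hEx : Matrix.toEuclideanLin E' x
      = Matrix.toEuclideanLin (Matrix.diagonal (fun i => (α i : ℂ))) x := by
    rw [hE'def, map_sub, LinearMap.sub_apply, hAx, sub_zero]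
  have hdiag1 : ∀ i, Matrix.toEuclideanLin (Matrix.diagonal (fun i => (α i : ℂ))) (bF i)
      = ((α i : ℝ) : ℂ) • bF i := by
    intro i
    rw [hbF]
    ext m
    by_cases h : m = i
    · subst h; simp [Matrix.toEuclideanLin_apply]
    · simp [Matrix.toEuclideanLin_apply, h]
  have hdiageig : ∀ i, (-(Matrix.toEuclideanLin (Matrix.diagonal (fun i => (α i : ℂ))))) (bF i)
      = (((-α) i : ℝ) : ℂ) • bF i := by
    intro i
    rw [LinearMap.neg_apply, hdiag1 i, Pi.neg_apply, Complex.ofReal_neg, neg_smul]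
  have hlb : α ⟨k + j, by omega⟩ * ‖x‖ ^ 2
      ≤ (inner ℂ x (Matrix.toEuclideanLin E' x) : ℂ).re := by
    have := quad_bound bF (-(Matrix.toEuclideanLin (Matrix.diagonal (fun i => (α i : ℂ)))))
      (-α) hdiageig sW (-(α ⟨k + j, by omega⟩)) ?_ x hxW
    · rw [LinearMap.neg_apply, inner_neg_right] at this
      simp only [Complex.neg_re, neg_mul] at this
      rw [hEx]
      linarith
    · intro i hi
      have hi' : (i : ℕ) < k + j + 1 := (Finset.mem_filter.mp hi).2
      simp only [Pi.neg_apply, neg_le_neg_iff]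
      exact hα (by rw [Fin.le_def]; simpa using by omega)
  have hxnorm : (0 : ℝ) < ‖x‖ ^ 2 := by
    have hne : ‖x‖ ≠ 0 := norm_ne_zero_iff.mpr hxne
    positivity
  nlinarith [hlb.trans hub]

end Aux

/-- The rank-`k` truncation `ρ_{1:k} = U diag(α₀,…,α_{k-1},0,…,0) Uᴴ` of a density matrix
`ρ = U diag(α) Uᴴ` (eigenvalues `α` non-increasing) satisfies
`‖ρ - ρ_{1:k}‖_p = (∑_{i ≥ k} αᵢ^p)^(1/p)`, and it is an optimal rank-`k` positive
semidefinite approximation of `ρ` in Schatten `p`-norm. -/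
theorem rank_k_truncation_optimal (d k : ℕ) (hk1 : 1 ≤ k) (hkd : k ≤ d)
    (p : ℝ) (hp : 1 ≤ p)
    (U : Matrix (Fin d) (Fin d) ℂ) (hU : U ∈ Matrix.unitaryGroup (Fin d) ℂ)
    (α : Fin d → ℝ) (hα : Antitone α)
    (ρ : Matrix (Fin d) (Fin d) ℂ)
    (hρdef : ρ = U * Matrix.diagonal (fun i => (α i : ℂ)) * Uᴴ)
    (hρ : ρ.PosSemidef) (hρtr : ρ.trace = 1)
    (ρtrunc : Matrix (Fin d) (Fin d) ℂ)
    (htrunc : ρtrunc =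
      U * Matrix.diagonal (fun i : Fin d => if (i : ℕ) < k then (α i : ℂ) else 0) * Uᴴ) :
    schattenNorm p (ρ - ρtrunc)
        = (∑ i ∈ Finset.univ.filter (fun i : Fin d => k ≤ (i : ℕ)), α i ^ p) ^ (1 / p)
      ∧ ∀ A : Matrix (Fin d) (Fin d) ℂ, A.PosSemidef → A.rank ≤ k →
          schattenNorm p (ρ - ρtrunc) ≤ schattenNorm p (ρ - A) := by
  classical
  have hppos : 0 < p := lt_of_lt_of_le one_pos hp
  have αnn : ∀ i, 0 ≤ α i := alpha_nonneg U hU α ρ hρdef hρ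
  set γ : Fin d → ℝ := fun i => if (i : ℕ) < k then 0 else α i with hγ
  have hM0 : ρ - ρtrunc = U * Matrix.diagonal (fun i => (γ i : ℂ)) * Uᴴ := by
    rw [hρdef, htrunc, ← sub_mul, ← mul_sub, Matrix.diagonal_sub]
    congr 2
    ext i m
    rcases eq_or_ne i m with rfl | hne
    · by_cases h : (i : ℕ) < k <;> simp [Matrix.diagonal_apply, hγ, h]
    · simp [Matrix.diagonal_apply, hne]
  have hsum0 : ∑ i, singularValues (ρ - ρtrunc) i ^ p
      = ∑ i ∈ Finset.univ.filter (fun i : Fin d => k ≤ (i : ℕ)), α i ^ p := by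
    rw [sum_singular_pow_conj_diag U hU γ hM0 p]
    rw [← Finset.sum_filter_add_sum_filter_not univ (fun i : Fin d => (i : ℕ) < k)]
    have h1 : ∑ i ∈ univ.filter (fun i : Fin d => (i : ℕ) < k), |γ i| ^ p = 0 := by
      apply Finset.sum_eq_zero
      intro i hi
      have : γ i = 0 := if_pos (Finset.mem_filter.mp hi).2
      rw [this, abs_zero, Real.zero_rpow (by linarith)]
    have h2 : univ.filter (fun i : Fin d => ¬ (i : ℕ) < k)
        = univ.filter (fun i : Fin d => k ≤ (i : ℕ)) := by
      apply Finset.filter_congr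
      intro i _
      simp [not_lt]
    rw [h1, h2, zero_add]
    apply Finset.sum_congr rfl
    intro i hi
    have hki : k ≤ (i : ℕ) := (Finset.mem_filter.mp hi).2
    have : γ i = α i := if_neg (by omega)
    rw [this, abs_of_nonneg (αnn i)]
  have part1 : schattenNorm p (ρ - ρtrunc)
      = (∑ i ∈ Finset.univ.filter (fun i : Fin d => k ≤ (i : ℕ)), α i ^ p) ^ (1 / p) := by
    unfold schattenNorm
    rw [hsum0]
  refine ⟨part1, fun A hA hArank => ?_⟩
  -- conjugate A by U
  set A' : Matrix (Fin d) (Fin d) ℂ := Uᴴ * A * U with hA'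
  have hUU' : U * Uᴴ = 1 := Matrix.mem_unitaryGroup_iff.mp hU
  have hU'U : Uᴴ * U = 1 := Matrix.mem_unitaryGroup_iff'.mp hU
  have hA'rank : A'.rank ≤ k :=
    le_trans (le_trans (Matrix.rank_mul_le_left _ U) (Matrix.rank_mul_le_right Uᴴ A)) hArank
  set E' : Matrix (Fin d) (Fin d) ℂ := Matrix.diagonal (fun i => (α i : ℂ)) - A' with hE'def
  have hdiagH : (Matrix.diagonal (fun i => (α i : ℂ))).IsHermitian := by
    unfold Matrix.IsHermitian
    rw [Matrix.diagonal_conjTranspose]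
    ext i m
    rcases eq_or_ne i m with rfl | hne
    · simp [Matrix.diagonal_apply, Complex.conj_ofReal]
    · simp [Matrix.diagonal_apply, hne]
  have hA'H : A'.IsHermitian := by
    unfold Matrix.IsHermitian
    rw [hA']
    simp only [Matrix.conjTranspose_mul, Matrix.conjTranspose_conjTranspose, hA.1.eq]
    rw [mul_assoc]
  have hE' : E'.IsHermitian := hdiagH.sub hA'H
  set lam : Fin d → ℝ := hE'.eigenvalues with hlam
  set τ : Equiv.Perm (Fin d) := Tuple.sort lam with hτ
  -- ρ - A as unitary conjugation of diagonal eigenvalues of E'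
  have hρA : ρ - A = (U * (hE'.eigenvectorUnitary : Matrix (Fin d) (Fin d) ℂ))
      * Matrix.diagonal (fun i => (lam i : ℂ))
      * (U * (hE'.eigenvectorUnitary : Matrix (Fin d) (Fin d) ℂ))ᴴ := by
    have h1 : ρ - A = U * E' * Uᴴ := by
      rw [hE'def, mul_sub, sub_mul, ← hρdef, hA']
      congr 1
      calc A = (U * Uᴴ) * A * (U * Uᴴ) := by rw [hUU', one_mul, mul_one]
        _ = U * (Uᴴ * A * U) * Uᴴ := by simp only [mul_assoc]
    have h2 : E' = (hE'.eigenvectorUnitary : Matrix (Fin d) (Fin d) ℂ)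
        * Matrix.diagonal (fun i => (lam i : ℂ))
        * (hE'.eigenvectorUnitary : Matrix (Fin d) (Fin d) ℂ)ᴴ := by
      conv_lhs => rw [hE'.spectral_theorem]
      rfl
    rw [h1, Matrix.conjTranspose_mul]
    conv_lhs => rw [h2]
    simp only [mul_assoc]
  have hUV : U * (hE'.eigenvectorUnitary : Matrix (Fin d) (Fin d) ℂ)
      ∈ Matrix.unitaryGroup (Fin d) ℂ :=
    Submonoid.mul_mem _ hU hE'.eigenvectorUnitary.2
  have hsumA : ∑ i, singularValues (ρ - A) i ^ p = ∑ i, |lam i| ^ p :=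
    sum_singular_pow_conj_diag _ hUV lam hρA p
  -- lower bound the sum
  have hperm : ∑ i, |lam i| ^ p = ∑ j, |lam (τ (Fin.rev j))| ^ p := by
    rw [← Equiv.sum_comp (Fin.revPerm.trans τ) (fun i => |lam i| ^ p)]
    rfl
  have hdrop : ∑ j ∈ univ.filter (fun j : Fin d => (j : ℕ) < d - k), |lam (τ (Fin.rev j))| ^ p
      ≤ ∑ j, |lam (τ (Fin.rev j))| ^ p := by
    apply Finset.sum_le_sum_of_subset_of_nonneg (Finset.filter_subset _ _)
    intro j _ _
    exact Real.rpow_nonneg (abs_nonneg _) p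
  set F : Fin d → ℝ := fun j =>
    if h : k + (j : ℕ) < d then α ⟨k + (j : ℕ), h⟩ ^ p else 0 with hF
  have hterm : ∀ j ∈ univ.filter (fun j : Fin d => (j : ℕ) < d - k),
      F j ≤ |lam (τ (Fin.rev j))| ^ p := by
    intro j hj
    have hjlt : (j : ℕ) < d - k := (Finset.mem_filter.mp hj).2
    have hkj : k + (j : ℕ) < d := by omega
    have hmu := mu_ge_alpha k hkd α hα A' hA'rank hE'def hE' (j : ℕ) hjlt
    have hrev : (⟨(j : ℕ), by omega⟩ : Fin d) = j := by
      apply Fin.ext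
      rfl
    rw [hrev] at hmu
    have h1 : α ⟨k + (j : ℕ), hkj⟩ ≤ |lam (τ (Fin.rev j))| :=
      le_trans hmu (le_abs_self _)
    rw [hF]
    simp only [dif_pos hkj]
    exact Real.rpow_le_rpow (αnn _) h1 (le_of_lt hppos)
  have hreindex : ∑ j ∈ univ.filter (fun j : Fin d => (j : ℕ) < d - k), F j
      = ∑ i ∈ Finset.univ.filter (fun i : Fin d => k ≤ (i : ℕ)), α i ^ p := by
    apply Finset.sum_bij (fun (j : Fin d)
      (hj : j ∈ univ.filter (fun j : Fin d => (j : ℕ) < d - k)) =>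
      (⟨k + (j : ℕ), by have := (Finset.mem_filter.mp hj).2; omega⟩ : Fin d))
    · intro a ha
      simp only [Finset.mem_filter, Finset.mem_univ, true_and]
      omega
    · intro a ha b hb hab
      have h : k + (a : ℕ) = k + (b : ℕ) := congrArg Fin.val hab
      exact Fin.ext (by omega)
    · intro b hb
      have hkb : k ≤ (b : ℕ) := (Finset.mem_filter.mp hb).2
      have hbd : (b : ℕ) < d := b.isLt
      refine ⟨⟨(b : ℕ) - k, by omega⟩, ?_, ?_⟩
      · simp only [Finset.mem_filter, Finset.mem_univ, true_and]
        omega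
      · apply Fin.ext
        show k + ((b : ℕ) - k) = (b : ℕ)
        omega
    · intro a ha
      have hka : k + (a : ℕ) < d := by
        have := (Finset.mem_filter.mp ha).2
        omega
      rw [hF]
      simp only [dif_pos hka]
  -- combine
  have hfinal : ∑ i ∈ Finset.univ.filter (fun i : Fin d => k ≤ (i : ℕ)), α i ^ p
      ≤ ∑ i, singularValues (ρ - A) i ^ p := by
    rw [hsumA, hperm, ← hreindex]
    exact le_trans (Finset.sum_le_sum hterm) hdrop
  rw [part1]
  unfold schattenNorm
  apply Real.rpow_le_rpow _ hfinal (by positivity)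
  apply Finset.sum_nonneg
  intro i _
  exact Real.rpow_nonneg (αnn i) p
end

section
/- Let ρ be a d×d density matrix, U a d×d unitary matrix, α ∈ ℝ^d with α₁ ≥ α₂ ≥ … ≥ α_d ≥ 0, 1 ≤ k ≤ d, and let Π be the diagonal projection onto the first k standard basis vectors. Then ‖U diag(α₁,…,α_k,0,…,0) Uᴴ − ρ‖₁ ≤ √(2k) · ‖diag(α) − Uᴴ ρ U‖₂ + 1 − tr(Π Uᴴ ρ U). -/
open Matrix
open scoped ComplexOrder
open scoped InnerProductSpace

namespace TTN
variable {d : ℕ}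
local notation "E" => EuclideanSpace ℂ (Fin d)
local notation "T" => Matrix.toEuclideanLin

lemma Tmul (A B : Matrix (Fin d) (Fin d) ℂ) (x : E) :
    T (A * B) x = T A (T B x) := by
  simp [Matrix.toEuclideanLin_apply, Matrix.mulVec_mulVec]

lemma Tone (x : E) : T (1 : Matrix (Fin d) (Fin d) ℂ) x = x := by
  simp [Matrix.toEuclideanLin_apply]

lemma inner_T_right (A : Matrix (Fin d) (Fin d) ℂ) (x y : E) :
    ⟪x, T A y⟫_ℂ = ⟪T Aᴴ x, y⟫_ℂ := by
  rw [Matrix.toEuclideanLin_conjTranspose_eq_adjoint, LinearMap.adjoint_inner_left]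

lemma inner_TT (A : Matrix (Fin d) (Fin d) ℂ) (x y : E) :
    ⟪T A x, T A y⟫_ℂ = ⟪x, T (Aᴴ * A) y⟫_ℂ := by
  have h := inner_T_right Aᴴ x (T A y)
  rw [Matrix.conjTranspose_conjTranspose] at h
  rw [Tmul, ← h]

noncomputable def zb (M : Matrix (Fin d) (Fin d) ℂ) : OrthonormalBasis (Fin d) ℂ E :=
  (Matrix.isHermitian_conjTranspose_mul_self M).eigenvectorBasis

lemma T_eigen (M : Matrix (Fin d) (Fin d) ℂ) (i : Fin d) :
    T (Mᴴ * M) (zb M i) =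
      (((Matrix.isHermitian_conjTranspose_mul_self M).eigenvalues i : ℂ)) • zb M i := by
  have h := (Matrix.isHermitian_conjTranspose_mul_self M).mulVec_eigenvectorBasis i
  rw [Matrix.toEuclideanLin_apply]
  rw [show (Matrix.isHermitian_conjTranspose_mul_self M).eigenvectorBasis i = zb M i from rfl] at h
  rw [h, WithLp.toLp_smul, WithLp.toLp_ofLp, RCLike.real_smul_eq_coe_smul (K := ℂ)]
  rfl

lemma sv_nonneg (M : Matrix (Fin d) (Fin d) ℂ) (i : Fin d) : 0 ≤ singularValues M i :=
  Real.sqrt_nonneg _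

lemma sv_sq (M : Matrix (Fin d) (Fin d) ℂ) (i : Fin d) :
    singularValues M i ^ 2 = (Matrix.isHermitian_conjTranspose_mul_self M).eigenvalues i :=
  Real.sq_sqrt (Matrix.eigenvalues_conjTranspose_mul_self_nonneg M i)

lemma inner_TM_TM (M : Matrix (Fin d) (Fin d) ℂ) (i j : Fin d) :
    ⟪T M (zb M i), T M (zb M j)⟫_ℂ =
      if i = j then ((singularValues M j : ℂ))^2 else 0 := by
  rw [inner_TT, T_eigen, inner_smul_right,
    orthonormal_iff_ite.mp (zb M).orthonormal]
  by_cases h : i = j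
  · subst h
    simp only [if_true, mul_one]
    norm_cast
    exact (sv_sq M i).symm
  · simp [h]

lemma norm_T_z (M : Matrix (Fin d) (Fin d) ℂ) (i : Fin d) :
    ‖T M (zb M i)‖ = singularValues M i := by
  have h := inner_TM_TM M i i
  simp only [if_true] at h
  have h2 : (‖T M (zb M i)‖ : ℝ)^2 = (singularValues M i)^2 := by
    rw [← inner_self_eq_norm_sq (𝕜 := ℂ), h, ← Complex.ofReal_pow]
    exact RCLike.ofReal_re _
  have := sv_nonneg M i
  nlinarith [norm_nonneg (T M (zb M i))]

noncomputable def wv (M : Matrix (Fin d) (Fin d) ℂ) (i : Fin d) : E :=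
  (((singularValues M i)⁻¹ : ℝ) : ℂ) • (T M (zb M i))

lemma T_z_eq (M : Matrix (Fin d) (Fin d) ℂ) (i : Fin d) :
    T M (zb M i) = ((singularValues M i : ℝ) : ℂ) • wv M i := by
  by_cases h : singularValues M i = 0
  · have h0 : ‖T M (zb M i)‖ = 0 := by rw [norm_T_z, h]
    rw [norm_eq_zero] at h0
    simp [wv, h, h0]
  · rw [wv, smul_smul]
    norm_cast
    rw [mul_inv_cancel₀ h]
    simp

lemma norm_w_le (M : Matrix (Fin d) (Fin d) ℂ) (i : Fin d) : ‖wv M i‖ ≤ 1 := by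
  rw [wv, norm_smul, norm_T_z]
  by_cases h : singularValues M i = 0
  · simp [h]
  · have hpos : 0 < singularValues M i := lt_of_le_of_ne (sv_nonneg M i) (Ne.symm h)
    rw [Complex.norm_real, Real.norm_eq_abs, abs_of_pos (by positivity), inv_mul_cancel₀ h]

lemma inner_w_T_z (M : Matrix (Fin d) (Fin d) ℂ) (i j : Fin d) :
    ⟪wv M i, T M (zb M j)⟫_ℂ =
      if i = j then ((singularValues M j : ℂ)) else 0 := by
  rw [wv, inner_smul_left, inner_TM_TM, Complex.conj_ofReal]
  by_cases h : i = j
  · subst h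
    simp only [if_true]
    by_cases h0 : singularValues M i = 0
    · simp [h0]
    · rw [sq, ← mul_assoc]
      norm_cast
      rw [inv_mul_cancel₀ h0, one_mul]
  · simp [h]

lemma inner_w_w (M : Matrix (Fin d) (Fin d) ℂ) (i j : Fin d) :
    ⟪wv M i, wv M j⟫_ℂ =
      if i = j then (((singularValues M j)⁻¹ : ℝ) : ℂ) * ((singularValues M j : ℂ)) else 0 := by
  rw [show wv M j = (((singularValues M j)⁻¹ : ℝ) : ℂ) • (T M (zb M j)) from rfl,
    inner_smul_right, inner_w_T_z]
  by_cases h : i = j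
  · simp [h]
  · simp [h]

lemma orthonormal_w (M : Matrix (Fin d) (Fin d) ℂ) :
    Orthonormal ℂ (fun i : {x : Fin d // singularValues M x ≠ 0} => wv M i) := by
  rw [orthonormal_iff_ite]
  intro i j
  rw [inner_w_w]
  by_cases h : i = j
  · subst h
    simp only [if_true, Subtype.coe_eta]
    norm_cast
    rw [inv_mul_cancel₀ i.2]
  · have h' : (i : Fin d) ≠ (j : Fin d) := fun hc => h (Subtype.ext hc)
    rw [if_neg h', if_neg h]


lemma T_apply_expand (M : Matrix (Fin d) (Fin d) ℂ) (x : E) :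
    T M x = ∑ i, ⟪zb M i, x⟫_ℂ • T M (zb M i) := by
  conv_lhs => rw [← (zb M).sum_repr x]
  rw [map_sum]
  refine Finset.sum_congr rfl fun i _ => ?_
  rw [OrthonormalBasis.repr_apply_apply, _root_.map_smul]

lemma bessel_subtype (s : Finset (Fin d)) (u : Fin d → E)
    (hu : Orthonormal ℂ (fun i : {x // x ∈ s} => u i)) (x : E) :
    ∑ i ∈ s, ‖⟪u i, x⟫_ℂ‖^2 ≤ ‖x‖^2 := by
  have h := hu.sum_inner_products_le (s := Finset.univ) x
  rw [← Finset.sum_coe_sort s (fun i => ‖⟪u i, x⟫_ℂ‖^2)]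
  exact h

lemma key_bound (M : Matrix (Fin d) (Fin d) ℂ) (s : Finset (Fin d)) (u v : Fin d → E)
    (hu : Orthonormal ℂ (fun i : {x // x ∈ s} => u i))
    (hv : Orthonormal ℂ (fun i : {x // x ∈ s} => v i)) :
    ∑ i ∈ s, ‖⟪u i, T M (v i)⟫_ℂ‖ ≤ ∑ i, singularValues M i := by
  have expand : ∀ i, ⟪u i, T M (v i)⟫_ℂ
      = ∑ j, ⟪zb M j, v i⟫_ℂ * (((singularValues M j : ℝ) : ℂ) * ⟪u i, wv M j⟫_ℂ) := by
    intro i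
    rw [T_apply_expand M (v i), inner_sum]
    refine Finset.sum_congr rfl fun j _ => ?_
    rw [inner_smul_right, T_z_eq, inner_smul_right]
  calc ∑ i ∈ s, ‖⟪u i, T M (v i)⟫_ℂ‖
      ≤ ∑ i ∈ s, ∑ j, singularValues M j *
          ((‖⟪u i, wv M j⟫_ℂ‖^2 + ‖⟪v i, zb M j⟫_ℂ‖^2)/2) := by
        refine Finset.sum_le_sum fun i _ => ?_
        rw [expand i]
        refine le_trans (norm_sum_le _ _) (Finset.sum_le_sum fun j _ => ?_)
        rw [norm_mul, norm_mul, Complex.norm_real, Real.norm_eq_abs,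
          abs_of_nonneg (sv_nonneg M j), norm_inner_symm (zb M j) (v i)]
        have ha := norm_nonneg (⟪u i, wv M j⟫_ℂ)
        have hb := norm_nonneg (⟪v i, zb M j⟫_ℂ)
        have hs := sv_nonneg M j
        nlinarith [sq_nonneg (‖⟪u i, wv M j⟫_ℂ‖ - ‖⟪v i, zb M j⟫_ℂ‖)]
    _ = ∑ j, singularValues M j *
          ((∑ i ∈ s, ‖⟪u i, wv M j⟫_ℂ‖^2 + ∑ i ∈ s, ‖⟪v i, zb M j⟫_ℂ‖^2)/2) := by
        rw [Finset.sum_comm]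
        refine Finset.sum_congr rfl fun j _ => ?_
        rw [← Finset.mul_sum, ← Finset.sum_div, Finset.sum_add_distrib]
    _ ≤ ∑ j, singularValues M j * ((1 + 1)/2) := by
        refine Finset.sum_le_sum fun j _ => ?_
        have hb1 : ∑ i ∈ s, ‖⟪u i, wv M j⟫_ℂ‖^2 ≤ 1 := by
          refine le_trans (bessel_subtype s u hu (wv M j)) ?_
          have := norm_w_le M j
          nlinarith [norm_nonneg (wv M j)]
        have hb2 : ∑ i ∈ s, ‖⟪v i, zb M j⟫_ℂ‖^2 ≤ 1 := by
          refine le_trans (bessel_subtype s v hv (zb M j)) ?_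
          rw [(zb M).orthonormal.1 j]
          norm_num
        have := sv_nonneg M j
        nlinarith
    _ = ∑ j, singularValues M j := by
        norm_num

lemma re_inner_w_T_z (M : Matrix (Fin d) (Fin d) ℂ) (i : Fin d) :
    (⟪wv M i, T M (zb M i)⟫_ℂ).re = singularValues M i := by
  rw [inner_w_T_z]
  simp

lemma orthonormal_w_s (M : Matrix (Fin d) (Fin d) ℂ) (s : Finset (Fin d))
    (hs : ∀ i ∈ s, singularValues M i ≠ 0) :
    Orthonormal ℂ (fun i : {x // x ∈ s} => wv M i) := by
  rw [orthonormal_iff_ite]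
  intro i j
  rw [inner_w_w]
  by_cases h : i = j
  · subst h
    simp only [if_true, Subtype.coe_eta]
    norm_cast
    rw [inv_mul_cancel₀ (hs i i.2)]
  · rw [if_neg (fun hc => h (Subtype.ext hc)), if_neg h]

lemma re_le_norm' (z : ℂ) : z.re ≤ ‖z‖ := by
  exact Complex.re_le_norm z

lemma sum_sv_add_le (A B : Matrix (Fin d) (Fin d) ℂ) :
    ∑ i, singularValues (A + B) i
      ≤ (∑ i, singularValues A i) + ∑ i, singularValues B i := by
  classical
  set M := A + B with hM
  set s : Finset (Fin d) := Finset.univ.filter (fun i => singularValues M i ≠ 0) with hsdef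
  have hmem : ∀ i ∈ s, singularValues M i ≠ 0 := fun i hi => (Finset.mem_filter.mp hi).2
  have hws := orthonormal_w_s M s hmem
  have hzs : Orthonormal ℂ (fun i : {x // x ∈ s} => zb M (i : Fin d)) :=
    (zb M).orthonormal.comp _ Subtype.val_injective
  have h1 : ∑ i, singularValues M i = ∑ i ∈ s, (⟪wv M i, T M (zb M i)⟫_ℂ).re := by
    have h0 := Finset.sum_filter_of_ne (s := Finset.univ)
      (p := fun i => singularValues M i ≠ 0) (f := fun i => singularValues M i)
      (fun x _ h => h)
    rw [← h0]
    exact Finset.sum_congr rfl fun i _ => (re_inner_w_T_z M i).symm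
  have hsplit : ∀ x : E, T M x = T A x + T B x := by
    intro x
    rw [hM, map_add]
    rfl
  calc ∑ i, singularValues M i
      = ∑ i ∈ s, ((⟪wv M i, T A (zb M i)⟫_ℂ).re + (⟪wv M i, T B (zb M i)⟫_ℂ).re) := by
        rw [h1]
        refine Finset.sum_congr rfl fun i _ => ?_
        rw [hsplit, inner_add_right, Complex.add_re]
    _ ≤ (∑ i ∈ s, ‖⟪wv M i, T A (zb M i)⟫_ℂ‖) + ∑ i ∈ s, ‖⟪wv M i, T B (zb M i)⟫_ℂ‖ := by
        rw [← Finset.sum_add_distrib]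
        exact Finset.sum_le_sum fun i _ => add_le_add (re_le_norm' _) (re_le_norm' _)
    _ ≤ (∑ i, singularValues A i) + ∑ i, singularValues B i :=
        add_le_add (key_bound A s _ _ hws hzs) (key_bound B s _ _ hws hzs)

lemma sum_sv_unitary_le (N V : Matrix (Fin d) (Fin d) ℂ) (hV : V * Vᴴ = 1) :
    ∑ i, singularValues (V * N * Vᴴ) i ≤ ∑ i, singularValues N i := by
  classical
  set M := V * N * Vᴴ with hM
  set s : Finset (Fin d) := Finset.univ.filter (fun i => singularValues M i ≠ 0) with hsdef
  have hmem : ∀ i ∈ s, singularValues M i ≠ 0 := fun i hi => (Finset.mem_filter.mp hi).2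
  have hws := orthonormal_w_s M s hmem
  have hzs : Orthonormal ℂ (fun i : {x // x ∈ s} => zb M (i : Fin d)) :=
    (zb M).orthonormal.comp _ Subtype.val_injective
  have hpres : ∀ x y : E, ⟪T Vᴴ x, T Vᴴ y⟫_ℂ = ⟪x, y⟫_ℂ := by
    intro x y
    rw [inner_TT, Matrix.conjTranspose_conjTranspose, hV, Tone]
  have hu : Orthonormal ℂ (fun i : {x // x ∈ s} => T Vᴴ (wv M i)) := by
    rw [orthonormal_iff_ite]
    intro i j
    rw [hpres]
    exact orthonormal_iff_ite.mp hws i j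
  have hv2 : Orthonormal ℂ (fun i : {x // x ∈ s} => T Vᴴ (zb M (i : Fin d))) := by
    rw [orthonormal_iff_ite]
    intro i j
    rw [hpres]
    exact orthonormal_iff_ite.mp hzs i j
  have h1 : ∑ i, singularValues M i = ∑ i ∈ s, (⟪wv M i, T M (zb M i)⟫_ℂ).re := by
    have h0 := Finset.sum_filter_of_ne (s := Finset.univ)
      (p := fun i => singularValues M i ≠ 0) (f := fun i => singularValues M i)
      (fun x _ h => h)
    rw [← h0]
    exact Finset.sum_congr rfl fun i _ => (re_inner_w_T_z M i).symm
  have h2 : ∀ i : Fin d, ⟪wv M i, T M (zb M i)⟫_ℂ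
      = ⟪T Vᴴ (wv M i), T N (T Vᴴ (zb M i))⟫_ℂ := by
    intro i
    conv_lhs => rw [hM, Tmul, Tmul, inner_T_right]
  calc ∑ i, singularValues M i
      = ∑ i ∈ s, (⟪T Vᴴ (wv M i), T N (T Vᴴ (zb M i))⟫_ℂ).re := by
        rw [h1]
        exact Finset.sum_congr rfl fun i _ => by rw [h2]
    _ ≤ ∑ i ∈ s, ‖⟪T Vᴴ (wv M i), T N (T Vᴴ (zb M i))⟫_ℂ‖ :=
        Finset.sum_le_sum fun i _ => re_le_norm' _
    _ ≤ ∑ i, singularValues N i := key_bound N s _ _ hu hv2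


lemma psd_inner_re_nonneg (R : Matrix (Fin d) (Fin d) ℂ) (hR : R.PosSemidef) (x : E) :
    0 ≤ (⟪x, T R x⟫_ℂ).re := by
  have h := hR.dotProduct_mulVec_nonneg ((WithLp.equiv 2 (Fin d → ℂ)) x)
  rw [Complex.le_def] at h
  have heq : ⟪x, T R x⟫_ℂ
      = dotProduct (star ((WithLp.equiv 2 (Fin d → ℂ)) x))
          (R *ᵥ ((WithLp.equiv 2 (Fin d → ℂ)) x)) := by
    rw [EuclideanSpace.inner_eq_star_dotProduct, dotProduct_comm]
    rfl
  rw [heq]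
  simpa using h.1

lemma T_R_z (R : Matrix (Fin d) (Fin d) ℂ) (hR : R.PosSemidef) (i : Fin d) :
    T R (zb R i) = ((singularValues R i : ℝ) : ℂ) • zb R i := by
  by_cases h0 : singularValues R i = 0
  · have hz : ‖T R (zb R i)‖ = 0 := by rw [norm_T_z, h0]
    rw [norm_eq_zero] at hz
    rw [hz, h0]
    simp
  · set y : E := T R (zb R i) - ((singularValues R i : ℝ) : ℂ) • zb R i with hy
    have hRz : T R (T R (zb R i))
        = (((Matrix.isHermitian_conjTranspose_mul_self R).eigenvalues i : ℝ) : ℂ) • zb R i := by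
      rw [← Tmul]
      have hRR : R * R = Rᴴ * R := by rw [hR.1]
      rw [hRR, T_eigen]
    have hss : ((singularValues R i : ℝ) : ℂ) * ((singularValues R i : ℝ) : ℂ)
        = (((Matrix.isHermitian_conjTranspose_mul_self R).eigenvalues i : ℝ) : ℂ) := by
      norm_cast
      rw [← sq, sv_sq]
    have hyz : T R y + ((singularValues R i : ℝ) : ℂ) • y = 0 := by
      have hexp : T R y + ((singularValues R i : ℝ) : ℂ) • y
          = T R (T R (zb R i)) - (((singularValues R i : ℝ) : ℂ)
              * ((singularValues R i : ℝ) : ℂ)) • zb R i := by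
        simp only [hy, map_sub, _root_.map_smul, smul_sub, smul_smul]
        abel
      rw [hexp, hss, hRz, sub_self]
    have key := congrArg (fun v => ⟪y, v⟫_ℂ) hyz
    simp only [inner_add_right, inner_smul_right, inner_zero_right] at key
    have hre := congrArg Complex.re key
    rw [Complex.add_re, Complex.mul_re] at hre
    simp only [Complex.ofReal_re, Complex.ofReal_im, zero_mul, sub_zero, Complex.zero_re] at hre
    have hyy : (⟪y, y⟫_ℂ).re = ‖y‖^2 := inner_self_eq_norm_sq (𝕜 := ℂ) y
    rw [hyy] at hre
    have hpos : 0 < singularValues R i := lt_of_le_of_ne (sv_nonneg R i) (Ne.symm h0)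
    have hnn := psd_inner_re_nonneg R hR y
    have hy0 : ‖y‖^2 = 0 := by nlinarith
    have : y = 0 := by
      rw [← norm_eq_zero]
      nlinarith [norm_nonneg y]
    rw [hy] at this
    rw [sub_eq_zero] at this
    exact this

lemma sum_sv_psd (R : Matrix (Fin d) (Fin d) ℂ) (hR : R.PosSemidef) :
    ∑ i, singularValues R i = R.trace.re := by
  classical
  set V : Matrix (Fin d) (Fin d) ℂ :=
    ((Matrix.isHermitian_conjTranspose_mul_self R).eigenvectorUnitary : Matrix (Fin d) (Fin d) ℂ)
    with hV
  have hVu : V * Vᴴ = 1 := by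
    have := (Matrix.isHermitian_conjTranspose_mul_self R).eigenvectorUnitary.2
    rw [← Matrix.star_eq_conjTranspose]
    exact (Matrix.mem_unitaryGroup_iff).mp this
  have hterm : ∀ i, ((singularValues R i : ℝ) : ℂ) = ⟪zb R i, T R (zb R i)⟫_ℂ := by
    intro i
    rw [T_R_z R hR, inner_smul_right, @inner_self_eq_norm_sq_to_K ℂ,
      (zb R).orthonormal.1 i]
    simp
  have hdiag : ∀ i, ⟪zb R i, T R (zb R i)⟫_ℂ = (Vᴴ * R * V) i i := by
    intro i
    rw [EuclideanSpace.inner_eq_star_dotProduct, dotProduct_comm, Matrix.ofLp_toEuclideanLin_apply,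
      mul_assoc, Matrix.mul_apply]
    rw [dotProduct]
    refine Finset.sum_congr rfl fun j _ => ?_
    have h1 : (Vᴴ) i j = star ((WithLp.equiv 2 (Fin d → ℂ)) (zb R i) j) := by
      rw [Matrix.conjTranspose_apply, hV, Matrix.IsHermitian.eigenvectorUnitary_apply]
      rfl
    have h2 : (R * V) j i = (R *ᵥ (WithLp.equiv 2 (Fin d → ℂ)) (zb R i)) j := by
      rw [Matrix.mul_apply, Matrix.mulVec, dotProduct]
      refine Finset.sum_congr rfl fun k _ => ?_
      rw [hV, Matrix.IsHermitian.eigenvectorUnitary_apply]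
      rfl
    rw [h1, h2, Pi.star_apply]
    rfl
  have htr : (Vᴴ * R * V).trace = R.trace := by
    rw [Matrix.trace_mul_cycle, hVu, one_mul]
  calc ∑ i, singularValues R i
      = ∑ i, (((singularValues R i : ℝ) : ℂ)).re := by simp
    _ = ∑ i, ((Vᴴ * R * V) i i).re := by
        refine Finset.sum_congr rfl fun i _ => ?_
        rw [hterm, hdiag]
    _ = ((Vᴴ * R * V).trace).re := by
        rw [Matrix.trace, Complex.re_sum]
        rfl
    _ = R.trace.re := by rw [htr]


lemma sum_eig_eq_trace (A : Matrix (Fin d) (Fin d) ℂ) (hA : A.IsHermitian) :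
    ∑ i, hA.eigenvalues i = A.trace.re := by
  classical
  have hsp := hA.spectral_theorem
  set V : Matrix (Fin d) (Fin d) ℂ := (hA.eigenvectorUnitary : Matrix (Fin d) (Fin d) ℂ)
  have hVu : star V * V = 1 := (Matrix.mem_unitaryGroup_iff').mp hA.eigenvectorUnitary.2
  have htr : A.trace = ∑ i, ((hA.eigenvalues i : ℝ) : ℂ) := by
    exact hA.trace_eq_sum_eigenvalues
  rw [htr, Complex.re_sum]
  exact (Finset.sum_congr rfl fun i _ => by rw [Complex.ofReal_re]).symm

lemma sum_sv_sq_eq (M : Matrix (Fin d) (Fin d) ℂ) :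
    ∑ i, singularValues M i ^ 2 = (Mᴴ * M).trace.re := by
  rw [← sum_eig_eq_trace _ (Matrix.isHermitian_conjTranspose_mul_self M)]
  exact Finset.sum_congr rfl fun i _ => sv_sq M i

lemma trace_conj_mul_re (M : Matrix (Fin d) (Fin d) ℂ) :
    (Mᴴ * M).trace.re = ∑ i, ∑ j, ‖M i j‖^2 := by
  rw [Matrix.trace, Complex.re_sum]
  rw [show ∑ i, ∑ j, ‖M i j‖^2 = ∑ j, ∑ i, ‖M i j‖^2 from Finset.sum_comm]
  refine Finset.sum_congr rfl fun j _ => ?_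
  rw [Matrix.diag, Matrix.mul_apply, Complex.re_sum]
  refine Finset.sum_congr rfl fun i _ => ?_
  rw [Matrix.conjTranspose_apply, RCLike.star_def, mul_comm, Complex.mul_conj]
  rw [Complex.normSq_eq_norm_sq]
  exact Complex.ofReal_re _

lemma rank_add_le' (A B : Matrix (Fin d) (Fin d) ℂ) :
    (A + B).rank ≤ A.rank + B.rank := by
  have hr : LinearMap.range (A + B).mulVecLin
      ≤ LinearMap.range A.mulVecLin ⊔ LinearMap.range B.mulVecLin := by
    rintro y ⟨x, rfl⟩
    rw [Matrix.mulVecLin_add]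
    exact Submodule.add_mem_sup ⟨x, rfl⟩ ⟨x, rfl⟩
  calc (A + B).rank ≤ Module.finrank ℂ
        (LinearMap.range A.mulVecLin ⊔ LinearMap.range B.mulVecLin : Submodule ℂ (Fin d → ℂ)) :=
      Submodule.finrank_mono hr
    _ ≤ A.rank + B.rank := Submodule.finrank_add_le_finrank_add_finrank _ _

lemma sv_ne_zero_iff (M : Matrix (Fin d) (Fin d) ℂ) (i : Fin d) :
    singularValues M i ≠ 0 ↔ (Matrix.isHermitian_conjTranspose_mul_self M).eigenvalues i ≠ 0 := by
  unfold singularValues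
  rw [not_iff_not, Real.sqrt_eq_zero']
  constructor
  · intro h
    exact le_antisymm h (Matrix.eigenvalues_conjTranspose_mul_self_nonneg M i)
  · intro h
    rw [h]

lemma sum_sv_le_sqrt_rank (M : Matrix (Fin d) (Fin d) ℂ) (r : ℕ) (hr : M.rank ≤ r) :
    ∑ i, singularValues M i
      ≤ Real.sqrt r * Real.sqrt (∑ i, singularValues M i ^ 2) := by
  classical
  set s : Finset (Fin d) := Finset.univ.filter (fun i => singularValues M i ≠ 0) with hs
  have hcard : (s.card : ℝ) ≤ (r : ℝ) := by
    have h1 : s.card = Fintype.card {i // singularValues M i ≠ 0} :=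
      (Fintype.card_subtype _).symm
    have h2 : Fintype.card {i // singularValues M i ≠ 0}
        = Fintype.card {i // (Matrix.isHermitian_conjTranspose_mul_self M).eigenvalues i ≠ 0} :=
      Fintype.card_congr (Equiv.subtypeEquivRight (fun i => sv_ne_zero_iff M i))
    have h3 := (Matrix.isHermitian_conjTranspose_mul_self M).rank_eq_card_non_zero_eigs
    have h4 : (Mᴴ * M).rank = M.rank := Matrix.rank_conjTranspose_mul_self M
    have : s.card = M.rank := by rw [h1, h2, ← h3, h4]
    exact_mod_cast this ▸ (Nat.cast_le.mpr hr)
  have h1 : ∑ i, singularValues M i = ∑ i ∈ s, singularValues M i := by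
    exact (Finset.sum_filter_of_ne (fun x _ h => h)).symm
  have h2 : (∑ i ∈ s, singularValues M i)^2 ≤ (s.card : ℝ) * ∑ i ∈ s, singularValues M i ^ 2 :=
    sq_sum_le_card_mul_sum_sq
  have h3 : ∑ i ∈ s, singularValues M i ^ 2 ≤ ∑ i, singularValues M i ^ 2 :=
    Finset.sum_le_sum_of_subset_of_nonneg (Finset.subset_univ s)
      (fun i _ _ => sq_nonneg _)
  have hsum_nonneg : 0 ≤ ∑ i, singularValues M i ^ 2 :=
    Finset.sum_nonneg fun i _ => sq_nonneg _
  rw [h1, ← Real.sqrt_mul (Nat.cast_nonneg r)]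
  rw [show ((r:ℝ) * ∑ i, singularValues M i ^2) = ((r:ℝ) * ∑ i, singularValues M i ^2) from rfl]
  rw [← Real.sqrt_sq (Finset.sum_nonneg fun (i : Fin d) _ => sv_nonneg M i)]
  apply Real.sqrt_le_sqrt
  calc (∑ i ∈ s, singularValues M i)^2
      ≤ (s.card : ℝ) * ∑ i ∈ s, singularValues M i ^ 2 := h2
    _ ≤ (r : ℝ) * ∑ i, singularValues M i ^ 2 := by
        apply mul_le_mul hcard h3 (Finset.sum_nonneg fun i _ => sq_nonneg _) (Nat.cast_nonneg r)

lemma eigs_eq_of_eq {A B : Matrix (Fin d) (Fin d) ℂ} (hA : A.IsHermitian) (hB : B.IsHermitian)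
    (h : A = B) : hA.eigenvalues = hB.eigenvalues := by
  subst h
  rfl

lemma sv_neg (R : Matrix (Fin d) (Fin d) ℂ) : singularValues (-R) = singularValues R := by
  funext i
  unfold singularValues
  rw [eigs_eq_of_eq (Matrix.isHermitian_conjTranspose_mul_self (-R))
    (Matrix.isHermitian_conjTranspose_mul_self R) (by simp)]

end TTN

namespace TTN
variable {d : ℕ}

lemma schatten1_eq (M : Matrix (Fin d) (Fin d) ℂ) :
    schattenNorm 1 M = ∑ i, singularValues M i := by
  unfold schattenNorm
  rw [show (1:ℝ)/1 = 1 by norm_num, Real.rpow_one]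
  exact Finset.sum_congr rfl fun i _ => Real.rpow_one _

lemma schatten2_eq (M : Matrix (Fin d) (Fin d) ℂ) :
    schattenNorm 2 M = Real.sqrt (∑ i, singularValues M i ^ 2) := by
  unfold schattenNorm
  rw [Real.sqrt_eq_rpow]
  congr 1
  refine Finset.sum_congr rfl fun i _ => ?_
  rw [show (2:ℝ) = ((2:ℕ):ℝ) by norm_num, Real.rpow_natCast]

end TTN

/-- For a density matrix `ρ`, a unitary `U`, non-increasing non-negative `α`, and `Π` the
diagonal projection onto the first `k` standard basis vectors,
`‖U diag(α₀,…,α_{k-1},0,…,0) Uᴴ - ρ‖₁ ≤ √(2k) ‖diag(α) - Uᴴ ρ U‖₂ + 1 - tr(Π Uᴴ ρ U)`. -/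
theorem truncation_trace_norm_bound (d k : ℕ) (hk1 : 1 ≤ k) (hkd : k ≤ d)
    (ρ : Matrix (Fin d) (Fin d) ℂ) (hρ : ρ.PosSemidef) (hρtr : ρ.trace = 1)
    (U : Matrix (Fin d) (Fin d) ℂ) (hU : U ∈ Matrix.unitaryGroup (Fin d) ℂ)
    (α : Fin d → ℝ) (hα : Antitone α) (hαnn : ∀ i, 0 ≤ α i)
    (Pk : Matrix (Fin d) (Fin d) ℂ)
    (hPk : Pk = Matrix.diagonal (fun i : Fin d => if (i : ℕ) < k then (1 : ℂ) else 0)) :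
    schattenNorm 1
        (U * Matrix.diagonal (fun i : Fin d => if (i : ℕ) < k then (α i : ℂ) else 0) * Uᴴ - ρ)
      ≤ Real.sqrt (2 * k) * schattenNorm 2 (Matrix.diagonal (fun i => (α i : ℂ)) - Uᴴ * ρ * U)
        + 1 - (Pk * (Uᴴ * ρ * U)).trace.re := by
  classical
  subst hPk
  set σM : Matrix (Fin d) (Fin d) ℂ := Uᴴ * ρ * U with hσM
  set D : Matrix (Fin d) (Fin d) ℂ := Matrix.diagonal (fun i => (α i : ℂ)) with hD
  set Dk : Matrix (Fin d) (Fin d) ℂ :=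
    Matrix.diagonal (fun i : Fin d => if (i : ℕ) < k then (α i : ℂ) else 0) with hDk
  set P : Matrix (Fin d) (Fin d) ℂ :=
    Matrix.diagonal (fun i : Fin d => if (i : ℕ) < k then (1 : ℂ) else 0) with hP
  set Q : Matrix (Fin d) (Fin d) ℂ :=
    Matrix.diagonal (fun i : Fin d => if (i : ℕ) < k then (0 : ℂ) else 1) with hQ
  set X : Matrix (Fin d) (Fin d) ℂ := D - σM with hX
  set Mm : Matrix (Fin d) (Fin d) ℂ := P * X + Q * X * P with hMm
  set R : Matrix (Fin d) (Fin d) ℂ := Q * σM * Q with hR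
  have hUU : U * Uᴴ = 1 := by
    rw [← Matrix.star_eq_conjTranspose]
    exact (Matrix.mem_unitaryGroup_iff).mp hU
  -- algebra: Mm - R = Dk - σM
  have halg : Mm + -R = Dk - σM := by
    rw [hMm, hR, hX, hD, hDk, hP, hQ]
    ext i j
    simp only [Matrix.add_apply, Matrix.neg_apply, Matrix.sub_apply, Matrix.diagonal_mul,
      Matrix.mul_diagonal, Matrix.diagonal_apply]
    by_cases hik : (i : ℕ) < k <;> by_cases hjk : (j : ℕ) < k <;>
      by_cases hij : i = j <;> simp [hik, hjk, hij] <;> ring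
  -- matrix identity
  have hmat : U * Dk * Uᴴ - ρ = U * (Mm + -R) * Uᴴ := by
    rw [halg]
    have hUσU : U * σM * Uᴴ = ρ := by
      rw [hσM]
      calc U * (Uᴴ * ρ * U) * Uᴴ = U * Uᴴ * ρ * (U * Uᴴ) := by
            simp only [mul_assoc]
        _ = ρ := by rw [hUU]; simp
    rw [Matrix.mul_sub, Matrix.sub_mul, hUσU]
  -- PSD of R
  have hσMpsd : σM.PosSemidef := hρ.conjTranspose_mul_mul_same U
  have hQH : Qᴴ = Q := by
    rw [hQ, Matrix.diagonal_conjTranspose]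
    refine congrArg Matrix.diagonal (funext fun i => ?_)
    by_cases h : (i : ℕ) < k <;> simp [h]
  have hRpsd : R.PosSemidef := by
    have h := hσMpsd.conjTranspose_mul_mul_same Q
    rw [hQH] at h
    rw [hR]
    exact h
  -- trace of R
  have hQQ : Q * Q = Q := by
    rw [hQ, Matrix.diagonal_mul_diagonal]
    refine congrArg Matrix.diagonal (funext fun i => ?_)
    by_cases h : (i : ℕ) < k <;> simp [h]
  have hQ1P : Q = 1 - P := by
    rw [hQ, hP, ← Matrix.diagonal_one, Matrix.diagonal_sub]
    refine congrArg Matrix.diagonal (funext fun i => ?_)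
    by_cases h : (i : ℕ) < k <;> simp [h]
  have htrσM : σM.trace = 1 := by
    rw [hσM, Matrix.trace_mul_cycle, hUU, one_mul, hρtr]
  have htrR : R.trace.re = 1 - (P * σM).trace.re := by
    have h1 : R.trace = σM.trace - (P * σM).trace := by
      rw [hR, Matrix.trace_mul_cycle, hQQ, hQ1P, Matrix.sub_mul, one_mul,
        Matrix.trace_sub]
    rw [h1, htrσM]
    rw [Complex.sub_re, Complex.one_re]
  -- rank bound for Mm
  have hcardk : Fintype.card {i : Fin d // (i : ℕ) < k} = k := by
    have e : {i : Fin d // (i : ℕ) < k} ≃ Fin k :=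
      { toFun := fun i => ⟨i.1, i.2⟩
        invFun := fun j => ⟨⟨j.1, lt_of_lt_of_le j.2 hkd⟩, j.2⟩
        left_inv := fun i => by ext; rfl
        right_inv := fun j => by ext; rfl }
    rw [Fintype.card_congr e, Fintype.card_fin]
  have hrankP : P.rank = k := by
    rw [hP, Matrix.rank_diagonal]
    have hc : Fintype.card {i : Fin d // (if (i : ℕ) < k then (1:ℂ) else 0) ≠ 0}
        = Fintype.card {i : Fin d // (i : ℕ) < k} :=
      Fintype.card_congr (Equiv.subtypeEquivRight (fun i => by
        by_cases h : (i : ℕ) < k <;> simp [h]))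
    rw [hc, hcardk]
  have hrank : Mm.rank ≤ 2 * k := by
    rw [hMm]
    refine le_trans (TTN.rank_add_le' _ _) ?_
    have h1 : (P * X).rank ≤ k := by
      refine le_trans (Matrix.rank_mul_le_left P X) ?_
      rw [hrankP]
    have h2 : (Q * X * P).rank ≤ k := by
      refine le_trans (Matrix.rank_mul_le_right (Q * X) P) ?_
      rw [hrankP]
    omega
  -- frobenius comparison
  have hfrob : ∑ i, singularValues Mm i ^ 2 ≤ ∑ i, singularValues X i ^ 2 := by
    rw [TTN.sum_sv_sq_eq, TTN.sum_sv_sq_eq, TTN.trace_conj_mul_re, TTN.trace_conj_mul_re]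
    refine Finset.sum_le_sum fun i _ => Finset.sum_le_sum fun j _ => ?_
    have hMmij : Mm i j = (if (i : ℕ) < k then (1:ℂ) else 0) * X i j
        + ((if (i : ℕ) < k then (0:ℂ) else 1) * X i j) * (if (j : ℕ) < k then (1:ℂ) else 0) := by
      rw [hMm, Matrix.add_apply, hP, hQ, Matrix.diagonal_mul, Matrix.mul_diagonal,
        Matrix.diagonal_mul]
    by_cases hik : (i : ℕ) < k <;> by_cases hjk : (j : ℕ) < k <;>
      simp [hMmij, hik, hjk] <;> positivity
  -- norms nonneg
  have hs2nonneg : 0 ≤ Real.sqrt (∑ i, singularValues X i ^ 2) := Real.sqrt_nonneg _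
  have hsqknn : (0:ℝ) ≤ Real.sqrt (2 * (k:ℝ)) := Real.sqrt_nonneg _
  -- chain
  have hcast : Real.sqrt ((2 * k : ℕ) : ℝ) = Real.sqrt (2 * (k : ℝ)) := by
    congr 1
    push_cast
    ring
  calc schattenNorm 1 (U * Dk * Uᴴ - ρ)
      = ∑ i, singularValues (U * (Mm + -R) * Uᴴ) i := by
        rw [TTN.schatten1_eq, hmat]
    _ ≤ ∑ i, singularValues (Mm + -R) i := TTN.sum_sv_unitary_le _ U hUU
    _ ≤ (∑ i, singularValues Mm i) + ∑ i, singularValues (-R) i := TTN.sum_sv_add_le _ _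
    _ = (∑ i, singularValues Mm i) + R.trace.re := by
        rw [TTN.sv_neg, TTN.sum_sv_psd R hRpsd]
    _ ≤ Real.sqrt (2 * (k:ℝ)) * Real.sqrt (∑ i, singularValues Mm i ^ 2) + R.trace.re := by
        have := TTN.sum_sv_le_sqrt_rank Mm (2 * k) hrank
        rw [hcast] at this
        linarith
    _ ≤ Real.sqrt (2 * (k:ℝ)) * Real.sqrt (∑ i, singularValues X i ^ 2) + R.trace.re := by
        have hmono := Real.sqrt_le_sqrt hfrob
        nlinarith [Real.sqrt_nonneg (∑ i, singularValues Mm i ^ 2)]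
    _ = Real.sqrt (2 * (k:ℝ)) * schattenNorm 2 X + (1 - (P * σM).trace.re) := by
        rw [TTN.schatten2_eq, htrR]
    _ = Real.sqrt (2 * (k:ℝ)) * schattenNorm 2 X + 1 - (P * σM).trace.re := by ring
end
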